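/- Let r, d ∈ ℕ and let 0 ≤ k_1 < k_2 < … < k_d = r be integers. If two splines φ_1, φ_2 ∈ Φ_{r,d−1} satisfy ‖φ_1^{(k_i)}‖ = ‖φ_2^{(k_i)}‖ for all i = 1,…,d, then φ_1 ≡ φ_2. -/

import Mathlib

open Set

/-- The "norm" of the k-th derivative of `x` on the half-line `ℝ₋ = (-∞,0]`:
for `k < r` it is the (essential) sup of `|x^{(k)}|` on `ℝ₋` (derivatives taken within `ℝ₋`);
for `k = r` it is the least Lipschitz constant of `x^{(r-1)}` on `ℝ₋`, which equals the
essential sup norm of the a.e. derivative `x^{(r)}`. -/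
noncomputable def nrm (r k : ℕ) (x : ℝ → ℝ) : ℝ :=
  if k = r then
    sInf {L : ℝ | 0 ≤ L ∧ LipschitzOnWith (Real.toNNReal L)
      (iteratedDerivWithin (r - 1) x (Set.Iic 0)) (Set.Iic 0)}
  else
    sSup ((fun t => |iteratedDerivWithin k x (Set.Iic 0) t|) '' Set.Iic 0)

/-- The class `L^{r,r}_{∞,∞}(ℝ₋)` of `r`-monotone functions: `x` has derivatives up to order
`r-1` on `ℝ₋`, `x^{(r-1)}` is Lipschitz on `ℝ₋` (equivalently, it is locally absolutely
continuous with essentially bounded a.e. derivative `x^{(r)}`), `x` is bounded,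
`x^{(k)} ≥ 0` on `ℝ₋` for `k = 0,…,r-1`, and `x^{(r)} ≥ 0` a.e.
(equivalently, `x^{(r-1)}` is nondecreasing on `ℝ₋`). -/
def MemLrr (r : ℕ) (x : ℝ → ℝ) : Prop :=
  ContDiffOn ℝ (r - 1 : ℕ) x (Set.Iic 0) ∧
  (∃ L : NNReal, LipschitzOnWith L (iteratedDerivWithin (r - 1) x (Set.Iic 0)) (Set.Iic 0)) ∧
  BddAbove ((fun t => |x t|) '' Set.Iic 0) ∧
  (∀ k, k < r → ∀ t ∈ Set.Iic (0 : ℝ), 0 ≤ iteratedDerivWithin k x (Set.Iic 0) t) ∧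
  MonotoneOn (iteratedDerivWithin (r - 1) x (Set.Iic 0)) (Set.Iic 0)

/-- The spline `φ(a_1,…,a_s,l;t) = (l/r!) ∑_{j=1}^s (-1)^{j+1} (t+a_j)_+^r`
(here `a` is 0-indexed: `a 0 = a_1`, …, `a (s-1) = a_s`). -/
noncomputable def splineFun (r s : ℕ) (a : ℕ → ℝ) (l : ℝ) : ℝ → ℝ :=
  fun t => (l / (Nat.factorial r : ℝ)) *
    ∑ j ∈ Finset.range s, (-1 : ℝ) ^ j * (max (t + a j) 0) ^ r

/-- `φ ∈ Φ_{r,n}`: `φ` is a spline of order `r` with `s` knots, `1 ≤ s ≤ n`,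
`a_1 > a_2 > … > a_s > 0` and `l > 0`. -/
def IsSpline (r n : ℕ) (φ : ℝ → ℝ) : Prop :=
  ∃ s : ℕ, 1 ≤ s ∧ s ≤ n ∧
    ∃ (a : ℕ → ℝ) (l : ℝ),
      (∀ i j, i < j → j < s → a j < a i) ∧ (∀ j, j < s → 0 < a j) ∧ 0 < l ∧
      φ = splineFun r s a l

/-- The tuple `(M_{k_lo},…,M_{k_d})` of positive numbers is admissible for
`L^{r,r}_{∞,∞}(ℝ₋)` and the orders `k_lo < … < k_d`. -/
def Admissible (r d lo : ℕ) (k : ℕ → ℕ) (M : ℕ → ℝ) : Prop :=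
  ∃ x : ℝ → ℝ, MemLrr r x ∧ ∀ i, lo ≤ i → i ≤ d → nrm r (k i) x = M i

/-- Type 1 admissible set (for the tuple of orders `k_lo,…,k_d`, of length `d-lo+1`):
some spline in `Φ_{r,d-lo} \ Φ_{r,d-lo-1}` realizes the prescribed norms. -/
def Type1 (r d lo : ℕ) (k : ℕ → ℕ) (M : ℕ → ℝ) : Prop :=
  Admissible r d lo k M ∧
  ∃ φ : ℝ → ℝ, IsSpline r (d - lo) φ ∧ ¬ IsSpline r (d - lo - 1) φ ∧
    ∀ i, lo ≤ i → i ≤ d → nrm r (k i) φ = M i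

/-- Type 2 admissible set: some spline in `Φ_{r,d-lo-1}` realizes the prescribed norms. -/
def Type2 (r d lo : ℕ) (k : ℕ → ℕ) (M : ℕ → ℝ) : Prop :=
  Admissible r d lo k M ∧
  ∃ φ : ℝ → ℝ, IsSpline r (d - lo - 1) φ ∧
    ∀ i, lo ≤ i → i ≤ d → nrm r (k i) φ = M i

/-- Type 3 admissible set: `k_lo = 0`, the set is not of Type 1, and some spline
`φ ∈ Φ_{r,d-lo}` plus a constant `C > 0` realizes the prescribed norms. -/
def Type3 (r d lo : ℕ) (k : ℕ → ℕ) (M : ℕ → ℝ) : Prop :=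
  Admissible r d lo k M ∧ k lo = 0 ∧ ¬ Type1 r d lo k M ∧
  ∃ (φ : ℝ → ℝ) (C : ℝ), IsSpline r (d - lo) φ ∧ 0 < C ∧
    ∀ i, lo ≤ i → i ≤ d → nrm r (k i) (fun t => φ t + C) = M i


open MeasureTheory

/-- Bounds for alternating sums of antitone nonnegative sequences. -/
lemma alt_sum_bounds : ∀ (s : ℕ) (c : ℕ → ℝ), (∀ i j, i ≤ j → j < s → c j ≤ c i) →
    (∀ j, j < s → 0 ≤ c j) →
    0 ≤ ∑ j ∈ Finset.range s, (-1:ℝ)^j * c j ∧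
      ∀ _ : 0 < s, ∑ j ∈ Finset.range s, (-1:ℝ)^j * c j ≤ c 0 := by
  intro s
  induction s with
  | zero => intro c _ _; simp
  | succ m ih =>
    intro c hmono hnn
    have h := ih (fun j => c (j+1)) (fun i j hij hj => hmono _ _ (by omega) (by omega))
      (fun j hj => hnn _ (by omega))
    have hrw : ∑ j ∈ Finset.range (m+1), (-1:ℝ)^j * c j
        = c 0 - ∑ j ∈ Finset.range m, (-1:ℝ)^j * c (j+1) := by
      rw [Finset.sum_range_succ']
      have : ∀ j, (-1:ℝ)^(j+1) * c (j+1) = -((-1:ℝ)^j * c (j+1)) := by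
        intro j; ring
      simp only [this, Finset.sum_neg_distrib]
      ring
    rcases Nat.eq_zero_or_pos m with hm | hm
    · subst hm
      rw [hrw]
      simp only [Finset.range_zero, Finset.sum_empty, sub_zero]
      exact ⟨hnn 0 (by omega), fun _ => le_refl _⟩
    · constructor
      · rw [hrw]
        have h2 := h.2 hm
        have : c 1 ≤ c 0 := hmono 0 1 (by omega) (by omega)
        linarith
      · intro _
        rw [hrw]
        linarith [h.1]

lemma max_add_le (u δ : ℝ) (hδ : 0 ≤ δ) : max (u+δ) 0 ≤ max u 0 + δ := by
  rcases le_total (u+δ) 0 with h | h <;> rcases le_total u 0 with h' | h' <;>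
    simp [max_eq_left, max_eq_right, *] <;> linarith

lemma max_sub_mono (u v δ : ℝ) (huv : u ≤ v) (hδ : 0 ≤ δ) :
    max (u+δ) 0 - max u 0 ≤ max (v+δ) 0 - max v 0 := by
  rcases le_total (u+δ) 0 with h1 | h1 <;> rcases le_total u 0 with h2 | h2 <;>
    rcases le_total (v+δ) 0 with h3 | h3 <;> rcases le_total v 0 with h4 | h4 <;>
    simp [max_eq_left, max_eq_right, *] <;> linarith

/-- derivative of `(max x 0)^q` for `q ≥ 2`. -/
lemma hasDerivAt_maxpow (q : ℕ) (hq : 2 ≤ q) (x : ℝ) :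
    HasDerivAt (fun y : ℝ => (max y 0)^q) (q * (max x 0)^(q-1)) x := by
  rcases lt_trichotomy x 0 with hx | hx | hx
  · have hev : (fun y : ℝ => (max y 0)^q) =ᶠ[nhds x] (fun _ => 0) := by
      filter_upwards [Iio_mem_nhds hx] with y hy
      have : y < 0 := hy
      simp [max_eq_right this.le, zero_pow (by omega : q ≠ 0)]
    have h0 : HasDerivAt (fun _ : ℝ => (0:ℝ)) (q * (max x 0)^(q-1)) x := by
      simpa [max_eq_right hx.le, zero_pow (by omega : q - 1 ≠ 0)] using
        (hasDerivAt_const x (0:ℝ))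
    exact HasDerivAt.congr_of_eventuallyEq h0 hev
  · subst hx
    have hval : (q:ℝ) * (max (0:ℝ) 0)^(q-1) = 0 := by
      simp [zero_pow (by omega : q - 1 ≠ 0)]
    rw [hval, hasDerivAt_iff_tendsto_slope]
    have hb : Filter.Tendsto (fun y : ℝ => |y|^(q-1)) (nhdsWithin 0 {(0:ℝ)}ᶜ) (nhds 0) := by
      have h1 : Filter.Tendsto (fun y : ℝ => |y|^(q-1)) (nhds 0) (nhds (|(0:ℝ)|^(q-1))) :=
        ((continuous_abs.pow (q-1)).tendsto (0:ℝ))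
      have h0 : |(0:ℝ)|^(q-1) = 0 := by simp [zero_pow (by omega : q - 1 ≠ 0)]
      rw [h0] at h1
      exact h1.mono_left nhdsWithin_le_nhds
    refine squeeze_zero_norm (fun y => ?_) hb
    simp only [slope_def_field, max_self, sub_zero]
    have h00 : (0:ℝ) ^ q = 0 := zero_pow (by omega : q ≠ 0)
    rw [h00]
    rcases le_or_gt y 0 with hy | hy
    · have hz : (y ⊔ 0) ^ q = 0 := by
        simp [max_eq_right hy, zero_pow (by omega : q ≠ 0)]
      rw [hz]
      simp
      try positivity
    · have hm : y ⊔ 0 = y := max_eq_left hy.le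
      rw [hm, sub_zero]
      have hy' : y ≠ 0 := ne_of_gt hy
      have hdiv : y ^ q / y = y ^ (q-1) := by
        rw [div_eq_iff hy', ← pow_succ]
        congr 1
        omega
      rw [hdiv, Real.norm_eq_abs, abs_pow]
  · have hev : (fun y : ℝ => (max y 0)^q) =ᶠ[nhds x] (fun y => y^q) := by
      filter_upwards [Ioi_mem_nhds hx] with y hy
      have : (0:ℝ) < y := hy
      simp [max_eq_left this.le]
    have h0 : HasDerivAt (fun y : ℝ => y^q) (q * (max x 0)^(q-1)) x := by
      simpa [max_eq_left hx.le] using hasDerivAt_pow q x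
    exact HasDerivAt.congr_of_eventuallyEq h0 hev

noncomputable def gfun (s : ℕ) (a : ℕ → ℝ) (q : ℕ) (t : ℝ) : ℝ :=
  ∑ j ∈ Finset.range s, (-1:ℝ)^j * (max (t + a j) 0)^q

lemma gfun_hasDerivAt (s : ℕ) (a : ℕ → ℝ) (q : ℕ) (hq : 2 ≤ q) (t : ℝ) :
    HasDerivAt (gfun s a q) (q * gfun s a (q-1) t) t := by
  have h : ∀ j ∈ Finset.range s, HasDerivAt
      (fun t : ℝ => (-1:ℝ)^j * (max (t + a j) 0)^q)
      ((-1:ℝ)^j * (q * (max (t + a j) 0)^(q-1))) t := by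
    intro j _
    have h1 : HasDerivAt (fun t : ℝ => t + a j) 1 t := (hasDerivAt_id t).add_const _
    have h2 := (hasDerivAt_maxpow q hq (t + a j)).comp t h1
    simpa using h2.const_mul ((-1:ℝ)^j)
  have hsum := HasDerivAt.fun_sum h
  have : ∑ j ∈ Finset.range s, (-1:ℝ)^j * (q * (max (t + a j) 0)^(q-1))
      = q * gfun s a (q-1) t := by
    rw [gfun, Finset.mul_sum]
    exact Finset.sum_congr rfl (fun j _ => by ring)
  rw [this] at hsum
  exact hsum

lemma gfun_nonneg (s : ℕ) (a : ℕ → ℝ) (ha : ∀ i j, i < j → j < s → a j < a i)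
    (q : ℕ) (t : ℝ) : 0 ≤ gfun s a q t := by
  refine (alt_sum_bounds s (fun j => (max (t + a j) 0)^q) ?_ ?_).1
  · intro i j hij hj
    rcases eq_or_lt_of_le hij with rfl | h
    · exact le_refl _
    · exact pow_le_pow_left₀ (le_max_right _ _)
        (max_le_max (by linarith [ha i j h hj]) (le_refl 0)) q
  · intro j _; positivity

lemma gfun_one_lip (s : ℕ) (a : ℕ → ℝ) (ha : ∀ i j, i < j → j < s → a j < a i)
    (t1 t2 : ℝ) (h : t1 ≤ t2) :
    0 ≤ gfun s a 1 t2 - gfun s a 1 t1 ∧ gfun s a 1 t2 - gfun s a 1 t1 ≤ t2 - t1 := by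
  have hd : gfun s a 1 t2 - gfun s a 1 t1
      = ∑ j ∈ Finset.range s, (-1:ℝ)^j * (max (t2 + a j) 0 - max (t1 + a j) 0) := by
    rw [gfun, gfun, ← Finset.sum_sub_distrib]
    exact Finset.sum_congr rfl (fun j _ => by ring)
  have hmono : ∀ i j, i ≤ j → j < s →
      max (t2 + a j) 0 - max (t1 + a j) 0 ≤ max (t2 + a i) 0 - max (t1 + a i) 0 := by
    intro i j hij hj
    have haij : a j ≤ a i := by
      rcases eq_or_lt_of_le hij with rfl | h'
      · exact le_refl _
      · exact (ha i j h' hj).le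
    have := max_sub_mono (t1 + a j) (t1 + a i) (t2 - t1) (by linarith) (by linarith)
    have e1 : t1 + a j + (t2 - t1) = t2 + a j := by ring
    have e2 : t1 + a i + (t2 - t1) = t2 + a i := by ring
    rwa [e1, e2] at this
  have hnn : ∀ j, j < s → 0 ≤ max (t2 + a j) 0 - max (t1 + a j) 0 := by
    intro j _
    have : max (t1 + a j) 0 ≤ max (t2 + a j) 0 :=
      max_le_max (by linarith) (le_refl 0)
    linarith
  have hb := alt_sum_bounds s (fun j => max (t2 + a j) 0 - max (t1 + a j) 0) hmono hnn
  constructor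
  · rw [hd]; exact hb.1
  · rw [hd]
    rcases Nat.eq_zero_or_pos s with rfl | hs
    · simp; linarith
    · refine le_trans (hb.2 hs) ?_
      have := max_add_le (t1 + a 0) (t2 - t1) (by linarith)
      have e1 : t1 + a 0 + (t2 - t1) = t2 + a 0 := by ring
      rw [e1] at this
      linarith

lemma gfun_mono (s : ℕ) (a : ℕ → ℝ) (ha : ∀ i j, i < j → j < s → a j < a i)
    (q : ℕ) (hq : 1 ≤ q) : Monotone (gfun s a q) := by
  rcases eq_or_lt_of_le hq with rfl | hq2
  · intro t1 t2 h
    linarith [(gfun_one_lip s a ha t1 t2 h).1]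
  · have hq2' : 2 ≤ q := hq2
    have hdiff : Differentiable ℝ (gfun s a q) :=
      fun t => (gfun_hasDerivAt s a q hq2' t).differentiableAt
    refine monotone_of_deriv_nonneg hdiff (fun t => ?_)
    rw [(gfun_hasDerivAt s a q hq2' t).deriv]
    have := gfun_nonneg s a ha (q-1) t
    positivity

lemma gfun_zero_eq (s : ℕ) (a : ℕ → ℝ) (hpos : ∀ j, j < s → 0 < a j) (q : ℕ) :
    gfun s a q 0 = ∑ j ∈ Finset.range s, (-1:ℝ)^j * (a j)^q := by
  refine Finset.sum_congr rfl (fun j hj => ?_)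
  rw [zero_add, max_eq_left (hpos j (Finset.mem_range.1 hj)).le]

lemma spline_iterD (r s : ℕ) (a : ℕ → ℝ) (l : ℝ) :
    ∀ m, m + 1 ≤ r → ∀ t ∈ Iic (0:ℝ),
    iteratedDerivWithin m (splineFun r s a l) (Iic 0) t
      = (l / (Nat.factorial (r - m) : ℝ)) * gfun s a (r - m) t := by
  intro m
  induction m with
  | zero =>
    intro _ t ht
    simp only [iteratedDerivWithin_zero, Nat.sub_zero, splineFun, gfun]
  | succ m ih =>
    intro hm t ht
    have hm' : m + 1 ≤ r := by omega
    have hq : 2 ≤ r - m := by omega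
    rw [iteratedDerivWithin_succ]
    have hg : HasDerivAt (fun u => (l / (Nat.factorial (r-m) : ℝ)) * gfun s a (r-m) u)
        ((l / (Nat.factorial (r-m) : ℝ)) * (((r-m : ℕ) : ℝ) * gfun s a (r-m-1) t)) t :=
      (gfun_hasDerivAt s a (r-m) hq t).const_mul _
    have hG : HasDerivWithinAt (iteratedDerivWithin m (splineFun r s a l) (Iic 0))
        ((l / (Nat.factorial (r-m) : ℝ)) * (((r-m : ℕ) : ℝ) * gfun s a (r-m-1) t)) (Iic 0) t :=
      (hg.hasDerivWithinAt).congr (fun y hy => (ih hm' y hy)) (ih hm' t ht)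
    rw [hG.derivWithin (uniqueDiffOn_Iic 0 t ht)]
    have e1 : r - (m+1) = r - m - 1 := by omega
    rw [e1]
    have hfac : (Nat.factorial (r - m) : ℝ)
        = ((r - m : ℕ) : ℝ) * (Nat.factorial (r - m - 1) : ℝ) := by
      have e2 : r - m = (r - m - 1) + 1 := by omega
      rw [e2, Nat.factorial_succ]
      push_cast
      ring_nf
    rw [hfac]
    have hne1 : ((r - m : ℕ) : ℝ) ≠ 0 := by
      have : 0 < r - m := by omega
      positivity
    have hne2 : (Nat.factorial (r - m - 1) : ℝ) ≠ 0 := by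
      positivity
    field_simp

section
variable (r s : ℕ) (a : ℕ → ℝ) (l : ℝ)

lemma nrm_spline_eval (ha : ∀ i j, i < j → j < s → a j < a i)
    (hpos : ∀ j, j < s → 0 < a j) (hl : 0 < l) (m : ℕ) (hmr : m + 1 ≤ r) :
    nrm r m (splineFun r s a l)
      = (l / (Nat.factorial (r - m) : ℝ)) * ∑ j ∈ Finset.range s, (-1:ℝ)^j * (a j)^(r-m) := by
  have hne : m ≠ r := by omega
  rw [nrm, if_neg hne]
  have hc : (0:ℝ) < l / (Nat.factorial (r - m) : ℝ) := by positivity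
  have himg : (fun t => |iteratedDerivWithin m (splineFun r s a l) (Iic 0) t|) '' Iic 0
      = (fun t => (l / (Nat.factorial (r-m) : ℝ)) * gfun s a (r-m) t) '' Iic 0 := by
    apply image_congr
    intro t ht
    rw [spline_iterD r s a l m hmr t ht, abs_of_nonneg]
    have := gfun_nonneg s a ha (r-m) t
    positivity
  rw [himg]
  have hub : ∀ y ∈ (fun t => (l / (Nat.factorial (r-m) : ℝ)) * gfun s a (r-m) t) '' Iic 0,
      y ≤ (l / (Nat.factorial (r-m) : ℝ)) * gfun s a (r-m) 0 := by
    rintro y ⟨t, ht, rfl⟩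
    have hmono := gfun_mono s a ha (r-m) (by omega) (mem_Iic.1 ht)
    exact mul_le_mul_of_nonneg_left hmono hc.le
  have hg : IsGreatest ((fun t => (l / (Nat.factorial (r-m) : ℝ)) * gfun s a (r-m) t) '' Iic 0)
      ((l / (Nat.factorial (r-m) : ℝ)) * gfun s a (r-m) 0) :=
    ⟨⟨0, mem_Iic.2 (le_refl _), rfl⟩, hub⟩
  rw [hg.csSup_eq, gfun_zero_eq s a hpos]

lemma nrm_spline_top (ha : ∀ i j, i < j → j < s → a j < a i)
    (hpos : ∀ j, j < s → 0 < a j) (hl : 0 < l) (hs : 1 ≤ s) (hr : 1 ≤ r) :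
    nrm r r (splineFun r s a l) = l := by
  rw [nrm, if_pos rfl]
  have hform : ∀ t ∈ Iic (0:ℝ),
      iteratedDerivWithin (r-1) (splineFun r s a l) (Iic 0) t = l * gfun s a 1 t := by
    intro t ht
    have h := spline_iterD r s a l (r-1) (by omega) t ht
    have e1 : r - (r-1) = 1 := by omega
    rw [e1] at h
    simpa using h
  have hset : {L : ℝ | 0 ≤ L ∧ LipschitzOnWith (Real.toNNReal L)
      (iteratedDerivWithin (r-1) (splineFun r s a l) (Iic 0)) (Iic 0)} = Ici l := by
    ext L
    simp only [mem_setOf_eq, mem_Ici]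
    constructor
    · rintro ⟨hL0, hLip⟩
      set u := -(a 0) with hu
      set v := if 1 < s then -(a 1) else -(a 0)/2 with hv
      have ha0 : 0 < a 0 := hpos 0 hs
      have huv : u < v := by
        rw [hu, hv]
        split_ifs with h1
        · have := ha 0 1 (by omega) h1
          linarith
        · linarith
      have hv0 : v ≤ 0 := by
        rw [hv]; split_ifs with h1
        · have := hpos 1 h1; linarith
        · linarith
      have hu0 : u ≤ 0 := by rw [hu]; linarith
      have hGu : gfun s a 1 u = 0 := by
        rw [gfun]
        apply Finset.sum_eq_zero
        intro j hj
        have hj' := Finset.mem_range.1 hj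
        have haj : a j ≤ a 0 := by
          rcases Nat.eq_zero_or_pos j with rfl | hjpos
          · exact le_refl _
          · exact (ha 0 j hjpos hj').le
        have : max (u + a j) 0 = 0 := by
          apply max_eq_right
          rw [hu]; linarith
        rw [this]
        simp
      have hGv : gfun s a 1 v = v + a 0 := by
        rw [gfun]
        rw [Finset.sum_eq_single_of_mem 0 (Finset.mem_range.2 hs)]
        · have hva : 0 ≤ v + a 0 := by
            rw [hv]; split_ifs with h1
            · have := ha 0 1 (by omega) h1; linarith
            · linarith
          rw [max_eq_left hva]
          simp
        · intro j hj hjne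
          have hj' := Finset.mem_range.1 hj
          have hj1 : 1 ≤ j := by omega
          have haj : a j ≤ a 1 := by
            rcases eq_or_lt_of_le hj1 with rfl | h'
            · exact le_refl _
            · exact (ha 1 j h' hj').le
          have hs1 : 1 < s := by omega
          have : max (v + a j) 0 = 0 := by
            apply max_eq_right
            rw [hv, if_pos hs1]
            linarith
          rw [this]
          simp
      have hd := (lipschitzOnWith_iff_dist_le_mul.1 hLip) v (mem_Iic.2 hv0) u (mem_Iic.2 hu0)
      rw [hform v (mem_Iic.2 hv0), hform u (mem_Iic.2 hu0), hGu, hGv] at hd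
      rw [Real.dist_eq, Real.dist_eq] at hd
      rw [mul_zero, sub_zero] at hd
      have hvu : v - u = v + a 0 := by rw [hu]; ring
      have hpos' : 0 < v + a 0 := by rw [hu] at huv; linarith
      rw [abs_of_pos (by positivity : 0 < l * (v + a 0)), abs_of_pos (by rw [hvu] at *; linarith : (0:ℝ) < v - u), hvu] at hd
      have hcoe : ((Real.toNNReal L : NNReal) : ℝ) = L := Real.coe_toNNReal L hL0
      rw [hcoe] at hd
      have := (mul_le_mul_iff_of_pos_right hpos').1 hd
      exact this
    · intro hL
      refine ⟨le_trans hl.le hL, ?_⟩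
      rw [lipschitzOnWith_iff_dist_le_mul]
      intro x hx y hy
      have hcoe : ((Real.toNNReal L : NNReal) : ℝ) = L := Real.coe_toNNReal L (le_trans hl.le hL)
      rw [hcoe, hform x hx, hform y hy, Real.dist_eq, Real.dist_eq]
      rcases le_total x y with hxy | hxy
      · have hlip := gfun_one_lip s a ha x y hxy
        rw [abs_of_nonpos (by nlinarith [hlip.1] : l * gfun s a 1 x - l * gfun s a 1 y ≤ 0),
          abs_of_nonpos (by linarith : x - y ≤ 0)]
        nlinarith [hlip.2]
      · have hlip := gfun_one_lip s a ha y x hxy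
        rw [abs_of_nonneg (by nlinarith [hlip.1] : 0 ≤ l * gfun s a 1 x - l * gfun s a 1 y),
          abs_of_nonneg (by linarith : 0 ≤ x - y)]
        nlinarith [hlip.2]
  rw [hset, csInf_Ici]

end


noncomputable def cnt (s : ℕ) (a : ℕ → ℝ) (x : ℝ) : ℕ := ((Finset.range s).filter (fun j => x ≤ a j)).card

noncomputable def NaF (s : ℕ) (a : ℕ → ℝ) (x : ℝ) : ℝ := if Odd (cnt s a x) then 1 else 0

noncomputable def Dfun (s : ℕ) (a : ℕ → ℝ) (s' : ℕ) (b : ℕ → ℝ) (x : ℝ) : ℝ :=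
  NaF s a x - NaF s' b x

lemma cnt_succ (s : ℕ) (a : ℕ → ℝ) (x : ℝ) :
    cnt (s+1) a x = (if x ≤ a 0 then 1 else 0) + cnt s (fun j => a (j+1)) x := by
  rw [cnt, cnt, Finset.card_filter, Finset.card_filter, Finset.sum_range_succ']
  ring

lemma NaF_zero (a : ℕ → ℝ) (x : ℝ) : NaF 0 a x = 0 := by
  simp [NaF, cnt]

lemma NaF_flip (s : ℕ) (a : ℕ → ℝ) (x : ℝ) (h : x ≤ a 0) :
    NaF (s+1) a x = 1 - NaF s (fun j => a (j+1)) x := by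
  rw [NaF, NaF, cnt_succ, if_pos h]
  rcases Nat.even_or_odd (cnt s (fun j => a (j+1)) x) with he | ho
  · rw [if_pos (by simpa [add_comm] using he.add_one), if_neg (by simpa using he)]
    norm_num
  · rw [if_neg (by simp [Nat.odd_add_one, Nat.even_add_one, Nat.not_even_iff_odd, ho, add_comm]), if_pos ho]
    norm_num

lemma NaF_top (s : ℕ) (a : ℕ → ℝ) (x : ℝ) (h : ∀ j, j < s → a j < x) : NaF s a x = 0 := by
  have : cnt s a x = 0 := by
    rw [cnt, Finset.card_eq_zero, Finset.filter_eq_empty_iff]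
    intro j hj
    exact not_le.2 (h j (Finset.mem_range.1 hj))
  simp [NaF, this]

lemma NaF_vals (s : ℕ) (a : ℕ → ℝ) (x : ℝ) : NaF s a x = 0 ∨ NaF s a x = 1 := by
  rw [NaF]; split_ifs <;> simp

lemma head_max (s : ℕ) (a : ℕ → ℝ) (ha : ∀ i j, i < j → j < s → a j < a i) :
    ∀ j, j < s → a j ≤ a 0 := by
  intro j hj
  rcases Nat.eq_zero_or_pos j with rfl | h
  · exact le_refl _
  · exact (ha 0 j h hj).le

/-- bridge: alternating indicator sum equals parity function. -/
lemma NaF_eq_sum (s : ℕ) (a : ℕ → ℝ) (ha : ∀ i j, i < j → j < s → a j < a i) (x : ℝ) :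
    NaF s a x = ∑ j ∈ Finset.range s, (-1:ℝ)^j * (if x ≤ a j then 1 else 0) := by
  induction s generalizing a with
  | zero => simp [NaF_zero]
  | succ m ih =>
    have hs : ∑ j ∈ Finset.range (m+1), (-1:ℝ)^j * (if x ≤ a j then 1 else 0)
        = (if x ≤ a 0 then (1:ℝ) else 0)
          - ∑ j ∈ Finset.range m, (-1:ℝ)^j * (if x ≤ a (j+1) then 1 else 0) := by
      rw [Finset.sum_range_succ']
      have : ∀ j : ℕ, (-1:ℝ)^(j+1) * (if x ≤ a (j+1) then (1:ℝ) else 0)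
          = -((-1:ℝ)^j * (if x ≤ a (j+1) then 1 else 0)) := fun j => by ring
      simp only [this, Finset.sum_neg_distrib]
      ring
    rw [hs, ← ih (fun j => a (j+1)) (fun i j hij hj => ha (i+1) (j+1) (by omega) (by omega))]
    rcases le_or_gt x (a 0) with h | h
    · rw [NaF_flip m a x h, if_pos h]
    · rw [if_neg (not_le.2 h), NaF_top (m+1) a x, NaF_top m (fun j => a (j+1)) x]
      · ring
      · intro j hj
        exact lt_of_le_of_lt (head_max (m+1) a ha (j+1) (by omega)) h
      · intro j hj
        exact lt_of_le_of_lt (head_max (m+1) a ha j (by omega)) h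

lemma cntZ_insert (Z : Finset ℝ) (w x : ℝ) (hw : w ∉ Z) (hx : x ≤ w) :
    ((insert w Z).filter (fun z => x ≤ z)).card = (Z.filter (fun z => x ≤ z)).card + 1 := by
  rw [Finset.filter_insert, if_pos hx,
    Finset.card_insert_of_notMem (fun hmem => hw (Finset.mem_of_mem_filter _ hmem))]

lemma cntZ_zero (Z : Finset ℝ) (x : ℝ) (h : ∀ z ∈ Z, z < x) :
    (Z.filter (fun z => x ≤ z)).card = 0 := by
  rw [Finset.card_eq_zero, Finset.filter_eq_empty_iff]
  intro z hz
  exact not_le.2 (h z hz)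

/-- Conclusion of the sign-structure lemma. -/
def LBC (s : ℕ) (a : ℕ → ℝ) (s' : ℕ) (b : ℕ → ℝ) : Prop :=
  ∃ (Z : Finset ℝ) (σ : ℝ), (σ = 1 ∨ σ = -1) ∧
    (∀ z ∈ Z, 0 < z ∧ ((∃ j, j < s ∧ z < a j) ∨ (∃ j, j < s' ∧ z < b j))) ∧
    (σ = 1 → Z.card ≤ s - 1 ∧ Z.card ≤ s') ∧
    (σ = -1 → Z.card ≤ s' - 1 ∧ Z.card ≤ s) ∧
    (∀ x, 0 < x → Dfun s a s' b x ≠ 0 →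
      Dfun s a s' b x = σ * (-1:ℝ)^((Z.filter (fun z => x ≤ z)).card))

lemma sorted_tail {s : ℕ} {a : ℕ → ℝ} (ha : ∀ i j, i < j → j < s + 1 → a j < a i) :
    ∀ i j, i < j → j < s → a (j+1) < a (i+1) := fun i j hij hj => ha (i+1) (j+1) (by omega) (by omega)

lemma pos_tail {s : ℕ} {a : ℕ → ℝ} (hp : ∀ j, j < s + 1 → 0 < a j) :
    ∀ j, j < s → 0 < a (j+1) := fun j hj => hp (j+1) (by omega)

/-- dominant-head case: `b 0 < a 0`, both lists nonempty. -/
lemma LB_dom (N : ℕ)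
    (IH : ∀ s s' (a b : ℕ → ℝ), s + s' ≤ N →
      (∀ i j, i < j → j < s → a j < a i) → (∀ j, j < s → 0 < a j) →
      (∀ i j, i < j → j < s' → b j < b i) → (∀ j, j < s' → 0 < b j) → LBC s a s' b)
    (s₀ s₀' : ℕ) (a b : ℕ → ℝ) (hN : (s₀+1) + (s₀'+1) ≤ N + 1)
    (ha : ∀ i j, i < j → j < s₀+1 → a j < a i) (hap : ∀ j, j < s₀+1 → 0 < a j)
    (hb : ∀ i j, i < j → j < s₀'+1 → b j < b i) (hbp : ∀ j, j < s₀'+1 → 0 < b j)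
    (hba : b 0 < a 0) : LBC (s₀+1) a (s₀'+1) b := by
  rcases Nat.eq_zero_or_pos s₀ with rfl | hs₀pos
  · -- D0 : single a-knot
    refine ⟨∅, 1, Or.inl rfl, by simp, fun _ => by simp, fun h => by norm_num at h, ?_⟩
    intro x hx hD
    simp only [Finset.filter_empty, Finset.card_empty, pow_zero, mul_one]
    rcases le_or_gt x (a 0) with h | h
    · have h1 : NaF 1 a x = 1 := by
        rw [NaF_flip 0 a x h, NaF_zero]; norm_num
      rcases NaF_vals (s₀'+1) b x with h2 | h2
      · rw [Dfun, h1, h2]; norm_num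
      · exfalso; apply hD; rw [Dfun, h1, h2]; norm_num
    · exfalso; apply hD
      rw [Dfun, NaF_top 1 a x (fun j hj => lt_of_le_of_lt (head_max 1 a ha j hj) h),
        NaF_top (s₀'+1) b x (fun j hj => lt_of_le_of_lt (head_max _ b hb j hj) (lt_trans hba h))]
      norm_num
  · obtain ⟨s₁, rfl⟩ : ∃ s₁, s₀ = s₁ + 1 := ⟨s₀ - 1, by omega⟩
    rcases le_or_gt (b 0) (a 1) with hba1 | hba1
    · -- D1 : drop two a-knots
      have hIH := IH s₁ (s₀'+1) (fun j => a (j+2)) b (by omega)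
        (fun i j hij hj => ha (i+2) (j+2) (by omega) (by omega))
        (fun j hj => hap (j+2) (by omega)) hb hbp
      obtain ⟨Z, σ, hσ, hZk, hc1, hc2, hpat⟩ := hIH
      have ha10 : a 1 < a 0 := ha 0 1 (by omega) (by omega)
      have hzlt : ∀ z ∈ Z, z < a 1 := by
        intro z hz
        rcases (hZk z hz).2 with ⟨j, hj, hlt⟩ | ⟨j, hj, hlt⟩
        · exact lt_trans hlt (ha 1 (j+2) (by omega) (by omega))
        · exact lt_of_lt_of_le hlt (le_trans (head_max (s₀'+1) b hb j hj) hba1)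
      -- common facts
      have hmid : ∀ x, a 1 < x → x ≤ a 0 → Dfun (s₁+2) a (s₀'+1) b x = 1 := by
        intro x h1 h2
        rw [Dfun, NaF_flip (s₁+1) a x h2,
          NaF_top (s₁+1) (fun j => a (j+1)) x (fun j hj =>
            lt_of_le_of_lt (head_max (s₁+1) _ (sorted_tail (by exact fun i j hij hj => ha i j hij (by omega))) j hj) h1),
          NaF_top (s₀'+1) b x (fun j hj => lt_of_le_of_lt (head_max _ b hb j hj) (lt_of_le_of_lt hba1 h1))]
        norm_num
      have hlow : ∀ x, x ≤ a 1 → Dfun (s₁+2) a (s₀'+1) b x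
          = Dfun s₁ (fun j => a (j+2)) (s₀'+1) b x := by
        intro x hxa
        rw [Dfun, Dfun, NaF_flip (s₁+1) a x (le_trans hxa ha10.le), NaF_flip s₁ _ x hxa]
        ring
      have htop : ∀ x, a 0 < x → Dfun (s₁+2) a (s₀'+1) b x = 0 := by
        intro x h1
        rw [Dfun, NaF_top _ a x (fun j hj => lt_of_le_of_lt (head_max _ a ha j hj) h1),
          NaF_top _ b x (fun j hj => lt_of_le_of_lt (head_max _ b hb j hj) (lt_trans hba h1))]
        norm_num
      rcases hσ with rfl | rfl
      · -- σ'' = 1 : keep Z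
        refine ⟨Z, 1, Or.inl rfl, ?_, ?_, fun h => by norm_num at h, ?_⟩
        · intro z hz
          refine ⟨(hZk z hz).1, ?_⟩
          rcases (hZk z hz).2 with ⟨j, hj, hlt⟩ | hr
          · exact Or.inl ⟨j+2, by omega, hlt⟩
          · exact Or.inr hr
        · intro _
          have := hc1 rfl
          omega
        · intro x hx hD
          rcases le_or_gt x (a 1) with h1 | h1
          · rw [hlow x h1]
            rw [hlow x h1] at hD
            exact hpat x hx hD
          rcases le_or_gt x (a 0) with h2 | h2
          · rw [hmid x h1 h2, cntZ_zero Z x (fun z hz => lt_trans (hzlt z hz) h1)]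
            norm_num
          · exact absurd (htop x h2) hD
      · -- σ'' = -1 : insert a 1
        have hnotmem : a 1 ∉ Z := fun h => lt_irrefl _ (hzlt _ h)
        refine ⟨insert (a 1) Z, 1, Or.inl rfl, ?_, ?_, fun h => by norm_num at h, ?_⟩
        · intro z hz
          rcases Finset.mem_insert.1 hz with rfl | hz'
          · exact ⟨hap 1 (by omega), Or.inl ⟨0, by omega, ha10⟩⟩
          · refine ⟨(hZk z hz').1, ?_⟩
            rcases (hZk z hz').2 with ⟨j, hj, hlt⟩ | hr
            · exact Or.inl ⟨j+2, by omega, hlt⟩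
            · exact Or.inr hr
        · intro _
          have := hc2 rfl
          rw [Finset.card_insert_of_notMem hnotmem]
          omega
        · intro x hx hD
          rcases le_or_gt x (a 1) with h1 | h1
          · rw [hlow x h1, cntZ_insert Z (a 1) x hnotmem h1]
            rw [hlow x h1] at hD
            rw [hpat x hx hD]
            ring
          rcases le_or_gt x (a 0) with h2 | h2
          · rw [hmid x h1 h2, cntZ_zero _ x ?_]
            · norm_num
            · intro z hz
              rcases Finset.mem_insert.1 hz with rfl | hz'
              · exact h1
              · exact lt_trans (hzlt z hz') h1
          · exact absurd (htop x h2) hD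
    · -- D2 : drop heads of both
      have hIH := IH (s₁+1) s₀' (fun j => a (j+1)) (fun j => b (j+1)) (by omega)
        (sorted_tail ha) (pos_tail hap) (sorted_tail hb) (pos_tail hbp)
      obtain ⟨Z, σ, hσ, hZk, hc1, hc2, hpat⟩ := hIH
      have hzlt : ∀ z ∈ Z, z < b 0 := by
        intro z hz
        rcases (hZk z hz).2 with ⟨j, hj, hlt⟩ | ⟨j, hj, hlt⟩
        · exact lt_of_lt_of_le hlt (le_trans (head_max (s₁+1) _ (sorted_tail ha) j hj) hba1.le)
        · refine lt_of_lt_of_le hlt (le_trans (head_max s₀' _ (sorted_tail hb) j hj) ?_)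
          rcases Nat.eq_zero_or_pos s₀' with rfl | h'
          · omega
          · exact (hb 0 1 (by omega) (by omega)).le
      have hmid : ∀ x, b 0 < x → x ≤ a 0 → Dfun (s₁+2) a (s₀'+1) b x = 1 := by
        intro x h1 h2
        rw [Dfun, NaF_flip (s₁+1) a x h2,
          NaF_top (s₁+1) (fun j => a (j+1)) x (fun j hj =>
            lt_of_le_of_lt (head_max (s₁+1) _ (sorted_tail ha) j hj) (lt_trans hba1 h1)),
          NaF_top (s₀'+1) b x (fun j hj => lt_of_le_of_lt (head_max _ b hb j hj) h1)]
        norm_num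
      have hlow : ∀ x, x ≤ b 0 → Dfun (s₁+2) a (s₀'+1) b x
          = - Dfun (s₁+1) (fun j => a (j+1)) s₀' (fun j => b (j+1)) x := by
        intro x hxb
        rw [Dfun, Dfun, NaF_flip (s₁+1) a x (le_trans hxb hba.le), NaF_flip s₀' b x hxb]
        ring
      have htop : ∀ x, a 0 < x → Dfun (s₁+2) a (s₀'+1) b x = 0 := by
        intro x h1
        rw [Dfun, NaF_top _ a x (fun j hj => lt_of_le_of_lt (head_max _ a ha j hj) h1),
          NaF_top _ b x (fun j hj => lt_of_le_of_lt (head_max _ b hb j hj) (lt_trans hba h1))]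
        norm_num
      rcases hσ with rfl | rfl
      · -- σ* = 1 : insert b 0, σ = 1
        have hnotmem : b 0 ∉ Z := fun h => lt_irrefl _ (hzlt _ h)
        refine ⟨insert (b 0) Z, 1, Or.inl rfl, ?_, ?_, fun h => by norm_num at h, ?_⟩
        · intro z hz
          rcases Finset.mem_insert.1 hz with rfl | hz'
          · exact ⟨hbp 0 (by omega), Or.inl ⟨0, by omega, hba⟩⟩
          · refine ⟨(hZk z hz').1, ?_⟩
            rcases (hZk z hz').2 with ⟨j, hj, hlt⟩ | ⟨j, hj, hlt⟩
            · exact Or.inl ⟨j+1, by omega, hlt⟩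
            · exact Or.inr ⟨j+1, by omega, hlt⟩
        · intro _
          have := hc1 rfl
          rw [Finset.card_insert_of_notMem hnotmem]
          omega
        · intro x hx hD
          rcases le_or_gt x (b 0) with h1 | h1
          · rw [hlow x h1, cntZ_insert Z (b 0) x hnotmem h1]
            rw [hlow x h1] at hD
            rw [hpat x hx (by intro hc; apply hD; rw [hc]; ring)]
            ring
          rcases le_or_gt x (a 0) with h2 | h2
          · rw [hmid x h1 h2, cntZ_zero _ x ?_]
            · norm_num
            · intro z hz
              rcases Finset.mem_insert.1 hz with rfl | hz'
              · exact h1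
              · exact lt_trans (hzlt z hz') h1
          · exact absurd (htop x h2) hD
      · -- σ* = -1 : keep Z, σ = 1
        refine ⟨Z, 1, Or.inl rfl, ?_, ?_, fun h => by norm_num at h, ?_⟩
        · intro z hz
          refine ⟨(hZk z hz).1, ?_⟩
          rcases (hZk z hz).2 with ⟨j, hj, hlt⟩ | ⟨j, hj, hlt⟩
          · exact Or.inl ⟨j+1, by omega, hlt⟩
          · exact Or.inr ⟨j+1, by omega, hlt⟩
        · intro _
          have := hc2 rfl
          omega
        · intro x hx hD
          rcases le_or_gt x (b 0) with h1 | h1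
          · rw [hlow x h1]
            rw [hlow x h1] at hD
            rw [hpat x hx (by intro hc; apply hD; rw [hc]; ring)]
            ring
          rcases le_or_gt x (a 0) with h2 | h2
          · rw [hmid x h1 h2, cntZ_zero Z x (fun z hz => lt_trans (hzlt z hz) h1)]
            norm_num
          · exact absurd (htop x h2) hD

lemma LB : ∀ (N s s' : ℕ) (a b : ℕ → ℝ), s + s' ≤ N →
    (∀ i j, i < j → j < s → a j < a i) → (∀ j, j < s → 0 < a j) →
    (∀ i j, i < j → j < s' → b j < b i) → (∀ j, j < s' → 0 < b j) →
    LBC s a s' b := by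
  intro N
  induction N with
  | zero =>
    intro s s' a b hN ha hap hb hbp
    have hs : s = 0 := by omega
    have hs' : s' = 0 := by omega
    subst hs; subst hs'
    exact ⟨∅, 1, Or.inl rfl, by simp, fun _ => by simp, fun h => by norm_num at h,
      fun x hx hD => absurd (by rw [Dfun, NaF_zero, NaF_zero]; ring) hD⟩
  | succ N ihN =>
    intro s s' a b hN ha hap hb hbp
    rcases Nat.eq_zero_or_pos s with rfl | hs
    · -- a empty : σ = -1, Z = ∅
      refine ⟨∅, -1, Or.inr rfl, by simp, fun h => by norm_num at h, fun _ => by simp, ?_⟩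
      intro x hx hD
      simp only [Finset.filter_empty, Finset.card_empty, pow_zero, mul_one]
      rcases NaF_vals s' b x with h2 | h2
      · exact absurd (by rw [Dfun, NaF_zero, h2]; ring) hD
      · rw [Dfun, NaF_zero, h2]; ring
    rcases Nat.eq_zero_or_pos s' with rfl | hs'
    · refine ⟨∅, 1, Or.inl rfl, by simp, fun _ => by simp, fun h => by norm_num at h, ?_⟩
      intro x hx hD
      simp only [Finset.filter_empty, Finset.card_empty, pow_zero, mul_one]
      rcases NaF_vals s a x with h2 | h2
      · exact absurd (by rw [Dfun, NaF_zero, h2]; ring) hD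
      · rw [Dfun, NaF_zero, h2]; ring
    obtain ⟨s₀, rfl⟩ : ∃ s₀, s = s₀ + 1 := ⟨s - 1, by omega⟩
    obtain ⟨s₀', rfl⟩ : ∃ s₀', s' = s₀' + 1 := ⟨s' - 1, by omega⟩
    rcases lt_trichotomy (b 0) (a 0) with hba | hba | hba
    · exact LB_dom N ihN s₀ s₀' a b hN ha hap hb hbp hba
    · -- equal heads
      have hIH := ihN s₀ s₀' (fun j => a (j+1)) (fun j => b (j+1)) (by omega)
        (sorted_tail ha) (pos_tail hap) (sorted_tail hb) (pos_tail hbp)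
      obtain ⟨Z, σ, hσ, hZk, hc1, hc2, hpat⟩ := hIH
      have hlow : ∀ x, x ≤ a 0 → Dfun (s₀+1) a (s₀'+1) b x
          = - Dfun s₀ (fun j => a (j+1)) s₀' (fun j => b (j+1)) x := by
        intro x hxa
        rw [Dfun, Dfun, NaF_flip s₀ a x hxa, NaF_flip s₀' b x (by rw [hba]; exact hxa)]
        ring
      have htop : ∀ x, a 0 < x → Dfun (s₀+1) a (s₀'+1) b x = 0 := by
        intro x h1
        rw [Dfun, NaF_top _ a x (fun j hj => lt_of_le_of_lt (head_max _ a ha j hj) h1),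
          NaF_top _ b x (fun j hj => lt_of_le_of_lt (head_max _ b hb j hj) (by rw [hba]; exact h1))]
        norm_num
      refine ⟨Z, -σ, ?_, ?_, ?_, ?_, ?_⟩
      · rcases hσ with rfl | rfl
        · exact Or.inr (by norm_num)
        · exact Or.inl (by norm_num)
      · intro z hz
        refine ⟨(hZk z hz).1, ?_⟩
        rcases (hZk z hz).2 with ⟨j, hj, hlt⟩ | ⟨j, hj, hlt⟩
        · exact Or.inl ⟨j+1, by omega, hlt⟩
        · exact Or.inr ⟨j+1, by omega, hlt⟩
      · intro h
        have hσ' : σ = -1 := by linarith [h]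
        have := hc2 hσ'
        omega
      · intro h
        have hσ' : σ = 1 := by linarith [h]
        have := hc1 hσ'
        omega
      · intro x hx hD
        rcases le_or_gt x (a 0) with h1 | h1
        · rw [hlow x h1]
          rw [hlow x h1] at hD
          rw [hpat x hx (by intro hc; apply hD; rw [hc]; ring)]
          ring
        · exact absurd (htop x h1) hD
    · -- b dominant : use symmetry
      have hsym := LB_dom N ihN s₀' s₀ b a (by omega) hb hbp ha hap hba
      obtain ⟨Z, σ, hσ, hZk, hc1, hc2, hpat⟩ := hsym
      refine ⟨Z, -σ, ?_, ?_, ?_, ?_, ?_⟩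
      · rcases hσ with rfl | rfl
        · exact Or.inr (by norm_num)
        · exact Or.inl (by norm_num)
      · intro z hz
        refine ⟨(hZk z hz).1, ?_⟩
        rcases (hZk z hz).2 with hr | hr
        · exact Or.inr hr
        · exact Or.inl hr
      · intro h
        exact hc2 (by linarith)
      · intro h
        exact hc1 (by linarith)
      · intro x hx hD
        have hsymx : Dfun (s₀+1) a (s₀'+1) b x = - Dfun (s₀'+1) b (s₀+1) a x := by
          rw [Dfun, Dfun]; ring
        rw [hsymx]
        rw [hpat x hx (by intro hc; apply hD; rw [hsymx, hc]; ring)]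
        ring


lemma rolleFinset (g : ℝ → ℝ) (hg : Differentiable ℝ g) :
    ∀ (n : ℕ) (Z : Finset ℝ), Z.card = n + 1 → (∀ z ∈ Z, g z = 0) →
    ∃ W : Finset ℝ, W.card = n ∧ ∀ w ∈ W, deriv g w = 0 ∧ w ∉ Z ∧ ∃ z ∈ Z, z < w := by
  intro n
  induction n with
  | zero => intro Z _ _; exact ⟨∅, rfl, by simp⟩
  | succ m ih =>
    intro Z hcard hroots
    have hne : Z.Nonempty := Finset.card_pos.1 (by omega)
    set z1 := Z.min' hne with hz1
    have hz1mem : z1 ∈ Z := Z.min'_mem hne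
    set Z' := Z.erase z1 with hZ'
    have hcard' : Z'.card = m + 1 := by
      rw [hZ', Finset.card_erase_of_mem hz1mem, hcard]
      omega
    have hne' : Z'.Nonempty := Finset.card_pos.1 (by omega)
    set z2 := Z'.min' hne' with hz2
    have hz2mem' : z2 ∈ Z' := Z'.min'_mem hne'
    have hz2mem : z2 ∈ Z := Finset.mem_of_mem_erase hz2mem'
    have h12 : z1 < z2 := Finset.min'_lt_of_mem_erase_min' _ hne (by rw [← hZ', ← hz1] at *; exact hz2mem')
    obtain ⟨w0, hw0mem, hw0⟩ := exists_deriv_eq_zero h12 (hg.continuous.continuousOn)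
      (by rw [hroots z1 hz1mem, hroots z2 hz2mem])
    obtain ⟨W', hW'card, hW'⟩ := ih Z' hcard' (fun z hz => hroots z (Finset.mem_of_mem_erase hz))
    have hW'big : ∀ w ∈ W', z2 < w := by
      intro w hw
      obtain ⟨z, hz, hzw⟩ := (hW' w hw).2.2
      exact lt_of_le_of_lt (Finset.min'_le _ _ hz) hzw
    have hw0W' : w0 ∉ W' := fun h => absurd (hW'big w0 h) (not_lt.2 hw0mem.2.le)
    refine ⟨insert w0 W', by rw [Finset.card_insert_of_notMem hw0W', hW'card], ?_⟩
    intro w hw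
    rcases Finset.mem_insert.1 hw with rfl | hw'
    · refine ⟨hw0, ?_, z1, hz1mem, hw0mem.1⟩
      intro hwZ
      have : w ∈ Z' := Finset.mem_erase.2 ⟨ne_of_gt hw0mem.1, hwZ⟩
      exact absurd (Finset.min'_le _ _ this) (not_le.2 hw0mem.2)
    · obtain ⟨hd, hnz, z, hz, hzw⟩ := hW' w hw'
      refine ⟨hd, ?_, z, Finset.mem_of_mem_erase hz, hzw⟩
      intro hwZ
      have hne1 : w ≠ z1 := ne_of_gt (lt_trans (lt_trans hw0mem.1 hw0mem.2) (hW'big w hw'))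
      exact hnz (Finset.mem_erase.2 ⟨hne1, hwZ⟩)

lemma gpoly_diff (F : Finset ℕ) (c : ℕ → ℝ) (e0 : ℕ) :
    Differentiable ℝ (fun x : ℝ => ∑ t ∈ F, c t * x ^ (t - e0)) := by
  intro x
  exact (HasDerivAt.fun_sum (fun t _ => (hasDerivAt_pow (t - e0) x).const_mul (c t))).differentiableAt

lemma deriv_gpoly (F : Finset ℕ) (c : ℕ → ℝ) (e0 : ℕ) (he0 : ∀ t ∈ F, e0 ≤ t)
    (he0F : e0 ∈ F) (x : ℝ) :
    deriv (fun x : ℝ => ∑ t ∈ F, c t * x ^ (t - e0)) x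
      = ∑ u ∈ (F.erase e0).image (fun t => t - (e0+1)),
          (((u:ℝ)+1) * c (u + e0 + 1)) * x ^ u := by
  have hd : HasDerivAt (fun x : ℝ => ∑ t ∈ F, c t * x ^ (t - e0))
      (∑ t ∈ F, c t * (((t - e0 : ℕ):ℝ) * x ^ (t - e0 - 1))) x := by
    apply HasDerivAt.fun_sum
    intro t _
    exact (hasDerivAt_pow (t - e0) x).const_mul (c t)
  rw [hd.deriv]
  rw [← Finset.add_sum_erase F _ he0F]
  have h0 : c e0 * (((e0 - e0 : ℕ):ℝ) * x ^ (e0 - e0 - 1)) = 0 := by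
    simp [Nat.sub_self]
  rw [h0, zero_add]
  rw [Finset.sum_image]
  · apply Finset.sum_congr rfl
    intro t ht
    have hta := he0 t (Finset.mem_of_mem_erase ht)
    have htb := Finset.ne_of_mem_erase ht
    have ht' : e0 + 1 ≤ t := by omega
    have e1 : t - (e0+1) + e0 + 1 = t := by omega
    have e2 : t - e0 - 1 = t - (e0+1) := by omega
    have e3 : ((t - e0 : ℕ):ℝ) = ((t - (e0+1) : ℕ):ℝ) + 1 := by
      have : t - e0 = (t - (e0+1)) + 1 := by omega
      rw [this]; push_cast; ring
    rw [e1, e2, e3]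
    ring
  · intro t1 h1 t2 h2 he
    have g1a := he0 t1 (Finset.mem_of_mem_erase h1)
    have g1b := Finset.ne_of_mem_erase h1
    have g2a := he0 t2 (Finset.mem_of_mem_erase h2)
    have g2b := Finset.ne_of_mem_erase h2
    simp only at he
    omega

lemma gpoly_val (F : Finset ℕ) (c : ℕ → ℝ) (e0 : ℕ) (he0 : ∀ t ∈ F, e0 ≤ t) (z : ℝ) :
    (∑ t ∈ F, c t * z ^ (t - e0)) * z ^ e0 = ∑ t ∈ F, c t * z ^ t := by
  rw [Finset.sum_mul]
  apply Finset.sum_congr rfl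
  intro t ht
  rw [mul_assoc, ← pow_add]
  have := he0 t ht
  congr 2
  omega

lemma Gcard (F : Finset ℕ) (e0 : ℕ) (he0 : ∀ t ∈ F, e0 ≤ t) (he0F : e0 ∈ F) :
    ((F.erase e0).image (fun t => t - (e0+1))).card = F.card - 1 := by
  rw [Finset.card_image_of_injOn, Finset.card_erase_of_mem he0F]
  intro t1 h1 t2 h2 he
  have g1a := he0 t1 (Finset.mem_of_mem_erase h1)
  have g1b := Finset.ne_of_mem_erase h1
  have g2a := he0 t2 (Finset.mem_of_mem_erase h2)
  have g2b := Finset.ne_of_mem_erase h2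
  simp only at he
  omega

lemma polyD : ∀ (n : ℕ) (F : Finset ℕ) (c : ℕ → ℝ) (Z : Finset ℝ), F.card = n →
    (∀ z ∈ Z, 0 < z) → (∀ z ∈ Z, ∑ t ∈ F, c t * z ^ t = 0) → F.card ≤ Z.card →
    ∀ t ∈ F, c t = 0 := by
  intro n
  induction n with
  | zero =>
    intro F c Z hF _ _ _ t ht
    rw [Finset.card_eq_zero] at hF
    subst hF
    exact absurd ht (Finset.notMem_empty t)
  | succ m ih =>
    intro F c Z hF hZpos hZroot hcard t ht
    have hFne : F.Nonempty := Finset.card_pos.1 (by omega)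
    set e0 := F.min' hFne with he0def
    have he0 : ∀ u ∈ F, e0 ≤ u := fun u hu => F.min'_le u hu
    have he0F : e0 ∈ F := F.min'_mem hFne
    set g := fun x : ℝ => ∑ u ∈ F, c u * x ^ (u - e0) with hgdef
    have hgroot : ∀ z ∈ Z, g z = 0 := by
      intro z hz
      have hz0 : (0:ℝ) < z := hZpos z hz
      have hval := gpoly_val F c e0 he0 z
      rw [hZroot z hz] at hval
      show ∑ u ∈ F, c u * z ^ (u - e0) = 0
      rcases mul_eq_zero.1 hval with h | h
      · exact h
      · exact absurd h (by positivity)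
    have hZne : Z.Nonempty := Finset.card_pos.1 (by omega)
    obtain ⟨k, hk⟩ : ∃ k, Z.card = k + 1 := ⟨Z.card - 1, by have := Finset.card_pos.2 hZne; omega⟩
    obtain ⟨W, hWcard, hW⟩ := rolleFinset g (gpoly_diff F c e0) k Z hk hgroot
    set G := (F.erase e0).image (fun t => t - (e0+1)) with hGdef
    set c' : ℕ → ℝ := fun u => ((u:ℝ)+1) * c (u + e0 + 1) with hc'def
    have hWpos : ∀ w ∈ W, 0 < w := by
      intro w hw
      obtain ⟨z, hz, hzw⟩ := (hW w hw).2.2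
      exact lt_trans (hZpos z hz) hzw
    have hWroot : ∀ w ∈ W, ∑ u ∈ G, c' u * w ^ u = 0 := by
      intro w hw
      rw [← deriv_gpoly F c e0 he0 he0F w]
      exact (hW w hw).1
    have hGcard : G.card = m := by
      rw [hGdef, Gcard F e0 he0 he0F, hF]
      omega
    have hGW : G.card ≤ W.card := by omega
    have hcz := ih G c' W hGcard hWpos hWroot hGW
    have hcoeff : ∀ u ∈ F, u ≠ e0 → c u = 0 := by
      intro u hu hune
      have hu' : u - (e0+1) ∈ G := by
        rw [hGdef]
        exact Finset.mem_image.2 ⟨u, Finset.mem_erase.2 ⟨hune, hu⟩, rfl⟩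
      have hz := hcz _ hu'
      simp only [hc'def] at hz
      have he : u - (e0+1) + e0 + 1 = u := by
        have := he0 u hu; omega
      rw [he] at hz
      have hne : ((u - (e0+1) : ℕ):ℝ) + 1 ≠ 0 := by positivity
      rcases mul_eq_zero.1 hz with h | h
      · exact absurd h hne
      · exact h
    rcases eq_or_ne t e0 with hte | htne
    · obtain ⟨z, hz⟩ := hZne
      have h1 := hZroot z hz
      rw [Finset.sum_eq_single e0] at h1
      · have hz0 : (0:ℝ) < z := hZpos z hz
        rw [hte]
        rcases mul_eq_zero.1 h1 with h | h
        · exact h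
        · exact absurd h (by positivity)
      · intro u hu hune
        rw [hcoeff u hu hune, zero_mul]
      · intro h
        exact absurd he0F h
    · exact hcoeff t ht htne

noncomputable def psi (F : Finset ℕ) (c : ℕ → ℝ) (x : ℝ) : ℝ := ∑ t ∈ F, c t * x ^ t

lemma psi_cont (F : Finset ℕ) (c : ℕ → ℝ) : Continuous (psi F c) := by
  apply continuous_finset_sum
  intro t _
  exact continuous_const.mul (continuous_pow t)

lemma coeff_from_G (F : Finset ℕ) (c : ℕ → ℝ) (e0 : ℕ) (he0 : ∀ t ∈ F, e0 ≤ t)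
    (h : ∀ u ∈ (F.erase e0).image (fun t => t - (e0+1)), ((u:ℝ)+1) * c (u + e0 + 1) = 0) :
    ∀ u ∈ F, u ≠ e0 → c u = 0 := by
  intro u hu hune
  have hu' : u - (e0+1) ∈ (F.erase e0).image (fun t => t - (e0+1)) :=
    Finset.mem_image.2 ⟨u, Finset.mem_erase.2 ⟨hune, hu⟩, rfl⟩
  have hz := h _ hu'
  have hle : e0 ≤ u := he0 u hu
  have he : u - (e0+1) + e0 + 1 = u := by omega
  rw [he] at hz
  have hne : ((u - (e0+1) : ℕ):ℝ) + 1 ≠ 0 := by positivity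
  rcases mul_eq_zero.1 hz with h' | h'
  · exact absurd h' hne
  · exact h'

section
variable (F : Finset ℕ) (c : ℕ → ℝ) (W : Finset ℝ)
variable (hWpos : ∀ w ∈ W, 0 < w) (hcard : W.card + 1 = F.card)
    (hroot : ∀ w ∈ W, psi F c w = 0) (hc : ∃ t ∈ F, c t ≠ 0)

include hWpos hcard hroot hc in
lemma psi_ne : ∀ x, 0 < x → x ∉ W → psi F c x ≠ 0 := by
  intro x hx hxW hpsix
  obtain ⟨t, ht, htc⟩ := hc
  apply htc
  refine polyD F.card F c (insert x W) rfl ?_ ?_ ?_ t ht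
  · intro z hz
    rcases Finset.mem_insert.1 hz with rfl | hz'
    · exact hx
    · exact hWpos z hz'
  · intro z hz
    rcases Finset.mem_insert.1 hz with rfl | hz'
    · exact hpsix
    · exact hroot z hz'
  · rw [Finset.card_insert_of_notMem hxW]
    omega

include hWpos hcard hroot hc in
lemma psi_sc : ∀ x y, 0 < x → x ≤ y → (∀ w ∈ W, ¬(x ≤ w ∧ w ≤ y)) →
    0 < psi F c x * psi F c y := by
  intro x y hx hxy hno
  have hxW : x ∉ W := fun h => hno x h ⟨le_refl x, hxy⟩
  have hyW : y ∉ W := fun h => hno y h ⟨hxy, le_refl y⟩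
  have hpx := psi_ne F c W hWpos hcard hroot hc x hx hxW
  have hpy := psi_ne F c W hWpos hcard hroot hc y (lt_of_lt_of_le hx hxy) hyW
  by_contra hle
  push_neg at hle
  have hlt : psi F c x * psi F c y < 0 := lt_of_le_of_ne hle (mul_ne_zero hpx hpy)
  have hxy' : x < y := by
    rcases eq_or_lt_of_le hxy with rfl | h
    · nlinarith
    · exact h
  have hcontOn : ContinuousOn (psi F c) (Icc x y) := (psi_cont F c).continuousOn
  rcases mul_neg_iff.1 hlt with ⟨hpos, hneg⟩ | ⟨hneg, hpos⟩
  · obtain ⟨z, hzIoo, hz0⟩ := intermediate_value_Ioo' hxy'.le hcontOn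
      (⟨hneg, hpos⟩ : (0:ℝ) ∈ Ioo (psi F c y) (psi F c x))
    have hzW : z ∉ W := fun h => hno z h ⟨hzIoo.1.le, hzIoo.2.le⟩
    exact psi_ne F c W hWpos hcard hroot hc z (lt_trans hx hzIoo.1) hzW hz0
  · obtain ⟨z, hzIoo, hz0⟩ := intermediate_value_Ioo hxy'.le hcontOn
      (⟨hneg, hpos⟩ : (0:ℝ) ∈ Ioo (psi F c x) (psi F c y))
    have hzW : z ∉ W := fun h => hno z h ⟨hzIoo.1.le, hzIoo.2.le⟩
    exact psi_ne F c W hWpos hcard hroot hc z (lt_trans hx hzIoo.1) hzW hz0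

include hWpos hcard hroot hc in
lemma psi_cross : ∀ w ∈ W, ∀ x y, 0 < x → x < w → w < y →
    (∀ w' ∈ W, w' ≠ w → ¬(x ≤ w' ∧ w' ≤ y)) →
    psi F c x * psi F c y < 0 := by
  intro w hw x y hx hxw hwy hno
  have hw0 : 0 < w := hWpos w hw
  have hy0 : 0 < y := lt_trans hw0 hwy
  have hxW : x ∉ W := fun h => hno x h (ne_of_lt hxw) ⟨le_refl x, (lt_trans hxw hwy).le⟩
  have hyW : y ∉ W := fun h => hno y h (ne_of_gt hwy) ⟨(lt_trans hxw hwy).le, le_refl y⟩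
  have hpx := psi_ne F c W hWpos hcard hroot hc x hx hxW
  have hpy := psi_ne F c W hWpos hcard hroot hc y hy0 hyW
  by_contra hge
  push_neg at hge
  have hprod : 0 < psi F c x * psi F c y :=
    lt_of_le_of_ne hge (Ne.symm (mul_ne_zero hpx hpy))
  have hleft : ∀ u, x ≤ u → u < w → 0 < psi F c x * psi F c u := by
    intro u hxu huw
    refine psi_sc F c W hWpos hcard hroot hc x u hx hxu ?_
    rintro w' hw' ⟨h1, h2⟩
    rcases eq_or_ne w' w with rfl | hne
    · exact absurd (lt_of_le_of_lt h2 huw) (lt_irrefl _)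
    · exact hno w' hw' hne ⟨h1, le_trans h2 (le_trans huw.le hwy.le)⟩
  have hright : ∀ u, w < u → u ≤ y → 0 < psi F c u * psi F c y := by
    intro u hwu huy
    refine psi_sc F c W hWpos hcard hroot hc u y (lt_trans hw0 hwu) huy ?_
    rintro w' hw' ⟨h1, h2⟩
    rcases eq_or_ne w' w with rfl | hne
    · exact absurd (lt_of_lt_of_le hwu h1) (lt_irrefl _)
    · exact hno w' hw' hne ⟨le_trans (le_trans hxw.le hwu.le) h1, h2⟩
  have hFne : F.Nonempty := by
    obtain ⟨t, ht, _⟩ := hc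
    exact ⟨t, ht⟩
  set e0 := F.min' hFne with he0def
  have he0 : ∀ u ∈ F, e0 ≤ u := fun u hu => F.min'_le u hu
  have he0F : e0 ∈ F := F.min'_mem hFne
  set g := fun x : ℝ => ∑ u ∈ F, c u * x ^ (u - e0) with hgdef
  have hgval : ∀ z : ℝ, psi F c z = g z * z ^ e0 := by
    intro z
    rw [psi, hgdef]
    exact (gpoly_val F c e0 he0 z).symm
  have hgsign : ∀ z : ℝ, 0 < z → (0 < psi F c z ↔ 0 < g z) := by
    intro z hz
    rw [hgval z]
    constructor
    · intro h
      by_contra hng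
      push_neg at hng
      nlinarith [pow_pos hz e0]
    · intro h
      have := pow_pos hz e0
      positivity
  have hgsign' : ∀ z : ℝ, 0 < z → (psi F c z < 0 ↔ g z < 0) := by
    intro z hz
    rw [hgval z]
    constructor
    · intro h
      by_contra hng
      push_neg at hng
      nlinarith [pow_pos hz e0]
    · intro h
      nlinarith [pow_pos hz e0]
  have hgroots : ∀ z ∈ W, g z = 0 := by
    intro z hz
    have hz0 : 0 < z := hWpos z hz
    have h1 := hgval z
    rw [hroot z hz] at h1
    have hp : (0:ℝ) < z ^ e0 := pow_pos hz0 e0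
    rcases mul_eq_zero.1 h1.symm with h | h
    · exact h
    · exact absurd h (ne_of_gt hp)
  have hgw : g w = 0 := hgroots w hw
  have hderivw : deriv g w = 0 := by
    rcases lt_or_gt_of_ne hpx with hxneg | hxpos
    · have hmax : IsLocalMax g w := by
        have hmem : Ioo x y ∈ nhds w := Ioo_mem_nhds hxw hwy
        rw [IsLocalMax, IsMaxFilter]
        filter_upwards [hmem] with u hu
        rw [hgw]
        rcases lt_trichotomy u w with h1 | rfl | h1
        · have h2 := hleft u hu.1.le h1
          have hun : psi F c u < 0 := by nlinarith
          have hu0 : 0 < u := lt_of_lt_of_le hx hu.1.le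
          exact ((hgsign' u hu0).1 hun).le
        · rw [hgw]
        · have h2 := hright u h1 hu.2.le
          have hyneg : psi F c y < 0 := by nlinarith
          have hun : psi F c u < 0 := by nlinarith
          have hu0 : 0 < u := lt_trans hw0 h1
          exact ((hgsign' u hu0).1 hun).le
      exact hmax.deriv_eq_zero
    · have hmin : IsLocalMin g w := by
        have hmem : Ioo x y ∈ nhds w := Ioo_mem_nhds hxw hwy
        rw [IsLocalMin, IsMinFilter]
        filter_upwards [hmem] with u hu
        rw [hgw]
        rcases lt_trichotomy u w with h1 | rfl | h1
        · have h2 := hleft u hu.1.le h1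
          have hun : 0 < psi F c u := by nlinarith
          have hu0 : 0 < u := lt_of_lt_of_le hx hu.1.le
          exact ((hgsign u hu0).1 hun).le
        · rw [hgw]
        · have h2 := hright u h1 hu.2.le
          have hypos : 0 < psi F c y := by nlinarith
          have hun : 0 < psi F c u := by nlinarith
          have hu0 : 0 < u := lt_trans hw0 h1
          exact ((hgsign u hu0).1 hun).le
      exact hmin.deriv_eq_zero
  have hWne : W.Nonempty := ⟨w, hw⟩
  obtain ⟨k, hk⟩ : ∃ k, W.card = k + 1 := ⟨W.card - 1, by have := Finset.card_pos.2 hWne; omega⟩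
  obtain ⟨V, hVcard, hV⟩ := rolleFinset g (gpoly_diff F c e0) k W hk hgroots
  have hwV : w ∉ V := fun h => (hV w h).2.1 hw
  set Z := insert w V with hZdef
  have hZcard : Z.card = k + 1 := by
    rw [hZdef, Finset.card_insert_of_notMem hwV, hVcard]
  set G := (F.erase e0).image (fun t => t - (e0+1)) with hGdef
  set c' : ℕ → ℝ := fun u => ((u:ℝ)+1) * c (u + e0 + 1) with hc'def
  have hZpos : ∀ z ∈ Z, 0 < z := by
    intro z hz
    rcases Finset.mem_insert.1 hz with rfl | hz'
    · exact hw0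
    · obtain ⟨z', hz', hlt⟩ := (hV z hz').2.2
      exact lt_trans (hWpos z' hz') hlt
  have hZroots : ∀ z ∈ Z, ∑ u ∈ G, c' u * z ^ u = 0 := by
    intro z hz
    have : ∑ u ∈ G, c' u * z ^ u = deriv g z := by
      rw [deriv_gpoly F c e0 he0 he0F z]
    rw [this]
    rcases Finset.mem_insert.1 hz with rfl | hz'
    · exact hderivw
    · exact (hV z hz').1
  have hGcard : G.card = k + 1 := by
    rw [hGdef, Gcard F e0 he0 he0F]
    omega
  have hcz := polyD G.card G c' Z rfl hZpos hZroots (by omega)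
  have hvanish : ∀ u ∈ F, u ≠ e0 → c u = 0 := by
    apply coeff_from_G F c e0 he0
    intro u hu
    exact hcz u hu
  have hpsiw : psi F c w = c e0 * w ^ e0 := by
    rw [psi, Finset.sum_eq_single e0]
    · intro u hu hune
      rw [hvanish u hu hune, zero_mul]
    · intro h
      exact absurd he0F h
  have hce0 : c e0 = 0 := by
    have h1 := hroot w hw
    rw [hpsiw] at h1
    rcases mul_eq_zero.1 h1 with h | h
    · exact h
    · exact absurd h (by positivity)
  obtain ⟨t, ht, htc⟩ := hc
  rcases eq_or_ne t e0 with rfl | htne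
  · exact htc hce0
  · exact htc (hvanish t ht htne)
include hWpos hcard hroot hc in
lemma psi_pattern : ∃ τ : ℝ, (τ = 1 ∨ τ = -1) ∧ ∀ x, 0 < x → x ∉ W →
    0 < psi F c x * τ * (-1:ℝ)^((W.filter (fun z => x ≤ z)).card) := by
  have hWne : (insert (1:ℝ) W).Nonempty := ⟨1, Finset.mem_insert_self _ _⟩
  set R := (insert (1:ℝ) W).max' hWne + 1 with hRdef
  have hR0 : 0 < R := by
    have : (1:ℝ) ≤ (insert (1:ℝ) W).max' hWne :=
      Finset.le_max' _ 1 (Finset.mem_insert_self _ _)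
    linarith
  have hRW : ∀ w ∈ W, w < R := by
    intro w hw
    have : w ≤ (insert (1:ℝ) W).max' hWne :=
      Finset.le_max' _ w (Finset.mem_insert_of_mem hw)
    linarith
  have hRnW : R ∉ W := fun h => lt_irrefl R (hRW R h)
  have hpR := psi_ne F c W hWpos hcard hroot hc R hR0 hRnW
  set t0 : ℝ := if 0 < psi F c R then 1 else -1 with ht0def
  refine ⟨t0, by rw [ht0def]; split_ifs <;> simp, ?_⟩
  have ht0R : 0 < psi F c R * t0 := by
    rw [ht0def]
    split_ifs with h
    · nlinarith
    · push_neg at h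
      have : psi F c R < 0 := lt_of_le_of_ne h hpR
      nlinarith
  have main : ∀ n x, 0 < x → x ∉ W → (W.filter (fun z => x ≤ z)).card = n →
      0 < psi F c x * t0 * (-1:ℝ)^n := by
    intro n
    induction n with
    | zero =>
      intro x hx hxW hcnt
      have hnone : ∀ w ∈ W, w < x := by
        intro w hw
        by_contra hlt
        push_neg at hlt
        have hmem : w ∈ W.filter (fun z => x ≤ z) := Finset.mem_filter.2 ⟨hw, hlt⟩
        rw [Finset.card_eq_zero] at hcnt
        rw [hcnt] at hmem
        exact absurd hmem (Finset.notMem_empty w)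
      have hsc : 0 < psi F c x * psi F c R := by
        rcases le_total x R with hxR | hRx
        · refine psi_sc F c W hWpos hcard hroot hc x R hx hxR ?_
          rintro w hw ⟨h1, _⟩
          exact absurd h1 (not_le.2 (hnone w hw))
        · have h2 := psi_sc F c W hWpos hcard hroot hc R x hR0 hRx ?_
          · nlinarith
          · rintro w hw ⟨h1, _⟩
            exact absurd h1 (not_le.2 (hRW w hw))
      simp only [pow_zero, mul_one]
      nlinarith [sq_nonneg (psi F c R)]
    | succ n ihn =>
      intro x hx hxW hcnt
      set Fx := W.filter (fun z => x ≤ z) with hFxdef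
      have hFxne : Fx.Nonempty := Finset.card_pos.1 (by omega)
      set w0 := Fx.min' hFxne with hw0def
      have hw0Fx : w0 ∈ Fx := Fx.min'_mem hFxne
      have hw0W : w0 ∈ W := (Finset.mem_filter.1 hw0Fx).1
      have hxw0 : x < w0 := by
        rcases eq_or_lt_of_le (Finset.mem_filter.1 hw0Fx).2 with heq | h
        · exact absurd (heq ▸ hw0W) hxW
        · exact h
      set S := W.filter (fun z => w0 < z) with hSdef
      have hSsub : S = Fx.erase w0 := by
        ext z
        simp only [hSdef, hFxdef, Finset.mem_filter, Finset.mem_erase]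
        constructor
        · rintro ⟨hzW, hz⟩
          exact ⟨ne_of_gt hz, hzW, le_trans hxw0.le hz.le⟩
        · rintro ⟨hne, hzW, hxz⟩
          refine ⟨hzW, ?_⟩
          rcases eq_or_lt_of_le (Finset.min'_le Fx z (Finset.mem_filter.2 ⟨hzW, hxz⟩)) with h | h
          · exact absurd h.symm hne
          · exact h
      have hScard : S.card = n := by
        rw [hSsub, Finset.card_erase_of_mem hw0Fx]
        omega
      have hychoice : ∃ y, w0 < y ∧ y ∉ W ∧ (W.filter (fun z => y ≤ z)).card = n ∧
          (∀ w' ∈ W, w' ≠ w0 → ¬(x ≤ w' ∧ w' ≤ y)) := by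
        rcases Finset.eq_empty_or_nonempty S with hSemp | hSne
        · refine ⟨w0 + 1, by linarith, ?_, ?_, ?_⟩
          · intro h
            have hmem : w0 + 1 ∈ S := Finset.mem_filter.2 ⟨h, by linarith⟩
            rw [hSemp] at hmem
            exact absurd hmem (Finset.notMem_empty _)
          · have hemp : W.filter (fun z => w0 + 1 ≤ z) = ∅ := by
              rw [Finset.filter_eq_empty_iff]
              intro z hz hcon
              have hmem : z ∈ S := Finset.mem_filter.2 ⟨hz, by linarith⟩
              rw [hSemp] at hmem
              exact absurd hmem (Finset.notMem_empty _)
            rw [hemp]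
            simp only [Finset.card_empty]
            rw [hSemp] at hScard
            simp at hScard
            omega
          · rintro w' hw' hne ⟨h1, h2⟩
            have hw'Fx : w' ∈ Fx := Finset.mem_filter.2 ⟨hw', h1⟩
            have hgt : w0 < w' := lt_of_le_of_ne (Finset.min'_le Fx w' hw'Fx) (Ne.symm hne)
            have hmem : w' ∈ S := Finset.mem_filter.2 ⟨hw', hgt⟩
            rw [hSemp] at hmem
            exact absurd hmem (Finset.notMem_empty _)
        · set w1 := S.min' hSne with hw1def
          have hw1S : w1 ∈ S := S.min'_mem hSne
          have hw01 : w0 < w1 := (Finset.mem_filter.1 hw1S).2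
          refine ⟨(w0 + w1)/2, by linarith, ?_, ?_, ?_⟩
          · intro h
            rcases le_or_gt ((w0+w1)/2) w0 with hc1 | hc1
            · linarith
            · have hmem : (w0+w1)/2 ∈ S := Finset.mem_filter.2 ⟨h, hc1⟩
              have hge := Finset.min'_le S _ hmem
              rw [← hw1def] at hge
              linarith
          · have heqS : W.filter (fun z => (w0+w1)/2 ≤ z) = S := by
              ext z
              simp only [Finset.mem_filter, hSdef]
              constructor
              · rintro ⟨hzW, hz⟩
                exact ⟨hzW, by linarith⟩
              · rintro ⟨hzW, hz⟩
                have hmem : z ∈ S := Finset.mem_filter.2 ⟨hzW, hz⟩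
                have hge := Finset.min'_le S _ hmem
                rw [← hw1def] at hge
                exact ⟨hzW, by linarith⟩
            rw [heqS, hScard]
          · rintro w' hw' hne ⟨h1, h2⟩
            have hw'Fx : w' ∈ Fx := Finset.mem_filter.2 ⟨hw', h1⟩
            have hgt : w0 < w' := lt_of_le_of_ne (Finset.min'_le Fx w' hw'Fx) (Ne.symm hne)
            have hmem : w' ∈ S := Finset.mem_filter.2 ⟨hw', hgt⟩
            have hge := Finset.min'_le S _ hmem
            rw [← hw1def] at hge
            linarith
      obtain ⟨y, hw0y, hyW, hycnt, hysep⟩ := hychoice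
      have hcross := psi_cross F c W hWpos hcard hroot hc w0 hw0W x y hx hxw0 hw0y hysep
      have hihy := ihn y (lt_trans (lt_trans hx hxw0) hw0y) hyW hycnt
      have hpy := psi_ne F c W hWpos hcard hroot hc y (lt_trans (lt_trans hx hxw0) hw0y) hyW
      have key : psi F c x * t0 * (-1:ℝ)^n < 0 := by
        have h3 := mul_neg_of_neg_of_pos hcross hihy
        nlinarith [h3, sq_nonneg (psi F c y)]
      rw [pow_succ]
      nlinarith
  intro x hx hxW
  exact main _ x hx hxW rfl
end

lemma sorted_tail' {s : ℕ} {a : ℕ → ℝ} (ha : ∀ i j, i < j → j < s + 1 → a j < a i) :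
    ∀ i j, i < j → j < s → a (j+1) < a (i+1) := fun i j hij hj => ha (i+1) (j+1) (by omega) (by omega)

/-- kernel existence : nontrivial coefficient vector vanishing at given points. -/
lemma exists_kernel (F : Finset ℕ) (W : Finset ℝ) (h : W.card + 1 = F.card) :
    ∃ c : ℕ → ℝ, (∃ t ∈ F, c t ≠ 0) ∧ ∀ w ∈ W, ∑ t ∈ F, c t * w ^ t = 0 := by
  classical
  set L : ({x // x ∈ F} → ℝ) →ₗ[ℝ] ({x // x ∈ W} → ℝ) :=
    { toFun := fun v w => ∑ t : {x // x ∈ F}, v t * (w:ℝ) ^ (t:ℕ)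
      map_add' := by
        intro u v
        funext w
        simp only [Pi.add_apply]
        rw [← Finset.sum_add_distrib]
        apply Finset.sum_congr rfl
        intro t _
        ring
      map_smul' := by
        intro r v
        funext w
        simp only [Pi.smul_apply, smul_eq_mul, RingHom.id_apply]
        rw [Finset.mul_sum]
        apply Finset.sum_congr rfl
        intro t _
        ring } with hLdef
  have hnotinj : ¬ Function.Injective L := by
    intro hinj
    have hle := LinearMap.finrank_le_finrank_of_injective hinj
    rw [Module.finrank_pi, Module.finrank_pi, Fintype.card_coe, Fintype.card_coe] at hle
    omega
  rw [Function.not_injective_iff] at hnotinj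
  obtain ⟨v1, v2, hv12, hne⟩ := hnotinj
  set v := v1 - v2 with hvdef
  have hv0 : L v = 0 := by
    rw [hvdef, map_sub, hv12, sub_self]
  have hvne : v ≠ 0 := by
    rw [hvdef, sub_ne_zero]
    exact hne
  set c : ℕ → ℝ := fun t => if ht : t ∈ F then v ⟨t, ht⟩ else 0 with hcdef
  refine ⟨c, ?_, ?_⟩
  · obtain ⟨i, hi⟩ := Function.ne_iff.1 hvne
    refine ⟨i.1, i.2, ?_⟩
    rw [hcdef]
    simp only [i.2, dif_pos]
    simpa using hi
  · intro w hw
    have h1 : L v ⟨w, hw⟩ = 0 := by rw [hv0]; rfl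
    have h2 : ∑ t : {x // x ∈ F}, v t * (w:ℝ) ^ (t:ℕ) = 0 := h1
    rw [← h2]
    rw [← Finset.sum_coe_sort F (fun t => c t * w ^ t)]
    apply Finset.sum_congr rfl
    intro t _
    rw [hcdef]
    simp only [t.2, dif_pos]
  
/-- equal parity functions force equal knot lists. -/
lemma NaF_inj : ∀ (N s s' : ℕ) (a b : ℕ → ℝ), s + s' ≤ N →
    (∀ i j, i < j → j < s → a j < a i) → (∀ j, j < s → 0 < a j) →
    (∀ i j, i < j → j < s' → b j < b i) → (∀ j, j < s' → 0 < b j) →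
    (∀ x, 0 < x → NaF s a x = NaF s' b x) →
    s = s' ∧ ∀ j, j < s → a j = b j := by
  intro N
  induction N with
  | zero =>
    intro s s' a b hN _ _ _ _ _
    have hs : s = 0 := by omega
    have hs' : s' = 0 := by omega
    exact ⟨by omega, fun j hj => by omega⟩
  | succ N ihN =>
    intro s s' a b hN ha hap hb hbp heq
    have hval : ∀ (u : ℕ) (d : ℕ → ℝ), 0 < u → (∀ i j, i < j → j < u → d j < d i) →
        NaF u d (d 0) = 1 := by
      intro u d hu hd
      obtain ⟨u₀, rfl⟩ : ∃ u₀, u = u₀ + 1 := ⟨u - 1, by omega⟩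
      rw [NaF_flip u₀ d (d 0) (le_refl _),
        NaF_top u₀ (fun j => d (j+1)) (d 0) (fun j hj => hd 0 (j+1) (by omega) (by omega))]
      norm_num
    rcases Nat.eq_zero_or_pos s with rfl | hs
    · rcases Nat.eq_zero_or_pos s' with rfl | hs'
      · exact ⟨rfl, fun j hj => by omega⟩
      · exfalso
        have h1 := heq (b 0) (hbp 0 hs')
        rw [NaF_zero, hval s' b hs' hb] at h1
        norm_num at h1
    rcases Nat.eq_zero_or_pos s' with rfl | hs'
    · exfalso
      have h1 := heq (a 0) (hap 0 hs)
      rw [NaF_zero, hval s a hs ha] at h1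
      norm_num at h1
    have hheads : a 0 = b 0 := by
      by_contra hne
      rcases lt_or_gt_of_ne hne with hlt | hgt
      · have h1 := heq (b 0) (hbp 0 hs')
        rw [hval s' b hs' hb, NaF_top s a (b 0)
          (fun j hj => lt_of_le_of_lt (head_max s a ha j hj) hlt)] at h1
        norm_num at h1
      · have h1 := heq (a 0) (hap 0 hs)
        rw [hval s a hs ha, NaF_top s' b (a 0)
          (fun j hj => lt_of_le_of_lt (head_max s' b hb j hj) hgt)] at h1
        norm_num at h1
    obtain ⟨s₀, rfl⟩ : ∃ s₀, s = s₀ + 1 := ⟨s - 1, by omega⟩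
    obtain ⟨s₀', rfl⟩ : ∃ s₀', s' = s₀' + 1 := ⟨s' - 1, by omega⟩
    have htail : ∀ x, 0 < x → NaF s₀ (fun j => a (j+1)) x = NaF s₀' (fun j => b (j+1)) x := by
      intro x hx
      rcases le_or_gt x (a 0) with h1 | h1
      · have h2 := heq x hx
        rw [NaF_flip s₀ a x h1, NaF_flip s₀' b x (by rw [← hheads]; exact h1)] at h2
        linarith
      · rw [NaF_top s₀ _ x (fun j hj => lt_of_le_of_lt (head_max (s₀+1) a ha (j+1) (by omega)) h1),
          NaF_top s₀' _ x (fun j hj => lt_of_le_of_lt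
            (le_trans (head_max (s₀'+1) b hb (j+1) (by omega)) (le_of_eq hheads.symm)) h1)]

    obtain ⟨hcard, htails⟩ := ihN s₀ s₀' (fun j => a (j+1)) (fun j => b (j+1)) (by omega)
      (sorted_tail' ha) (fun j hj => hap (j+1) (by omega))
      (sorted_tail' hb) (fun j hj => hbp (j+1) (by omega)) htail
    refine ⟨by omega, ?_⟩
    intro j hj
    rcases Nat.eq_zero_or_pos j with rfl | hjpos
    · exact hheads
    · obtain ⟨j₀, rfl⟩ : ∃ j₀, j = j₀ + 1 := ⟨j - 1, by omega⟩
      exact htails j₀ (by omega)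

lemma ind_int {ψ : ℝ → ℝ} (hψ : Continuous ψ) (y u v : ℝ) :
    IntervalIntegrable ((Iic y).indicator ψ) volume u v := by
  rw [intervalIntegrable_iff]
  exact (intervalIntegrable_iff.1 (hψ.intervalIntegrable u v)).indicator measurableSet_Iic

lemma int_indicator {ψ π : ℝ → ℝ} (hψ : Continuous ψ)
    (hπ : ∀ x, HasDerivAt π (ψ x) x) (hπ0 : π 0 = 0) (T y : ℝ) (hy : 0 < y) (hyT : y ≤ T) :
    ∫ x in (0:ℝ)..T, (Iic y).indicator ψ x = π y := by
  have h1 : ∫ x in (0:ℝ)..y, (Iic y).indicator ψ x = π y := by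
    have hcong : EqOn ((Iic y).indicator ψ) ψ (uIcc 0 y) := by
      intro x hx
      rw [uIcc_of_le hy.le] at hx
      exact indicator_of_mem (mem_Iic.2 hx.2) ψ
    rw [intervalIntegral.integral_congr hcong,
      intervalIntegral.integral_eq_sub_of_hasDerivAt (fun x _ => hπ x)
        (hψ.intervalIntegrable _ _), hπ0, sub_zero]
  have h2 : ∫ x in y..T, (Iic y).indicator ψ x = 0 := by
    have hcong : ∀ᵐ (x:ℝ), x ∈ Set.uIoc y T → (Iic y).indicator ψ x = (0:ℝ) := by
      apply Filter.Eventually.of_forall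
      intro x hx
      rw [Set.uIoc_of_le hyT] at hx
      exact Set.indicator_of_notMem (fun hm => absurd (mem_Iic.1 hm) (not_le.2 hx.1)) ψ
    rw [intervalIntegral.integral_congr_ae hcong]
    simp
  rw [← intervalIntegral.integral_add_adjacent_intervals (ind_int hψ y 0 y) (ind_int hψ y y T),
    h1, h2, add_zero]

lemma NaF_mul_repr (s : ℕ) (a : ℕ → ℝ) (ha : ∀ i j, i < j → j < s → a j < a i)
    (ψ : ℝ → ℝ) (x : ℝ) :
    NaF s a x * ψ x = ∑ j ∈ Finset.range s, (-1:ℝ)^j * ((Iic (a j)).indicator ψ x) := by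
  rw [NaF_eq_sum s a ha, Finset.sum_mul]
  apply Finset.sum_congr rfl
  intro j _
  rw [Set.indicator_apply]
  by_cases h : x ≤ a j
  · simp only [mem_Iic, h, if_true]
    ring
  · simp only [mem_Iic, h, if_false]
    ring

lemma NaF_mul_int (s : ℕ) (a : ℕ → ℝ) (ha : ∀ i j, i < j → j < s → a j < a i)
    {ψ : ℝ → ℝ} (hψ : Continuous ψ) (u v : ℝ) :
    IntervalIntegrable (fun x => NaF s a x * ψ x) volume u v := by
  have heq : (fun x => NaF s a x * ψ x)
      = fun x => ∑ j ∈ Finset.range s, (-1:ℝ)^j * ((Iic (a j)).indicator ψ x) :=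
    funext (fun x => NaF_mul_repr s a ha ψ x)
  rw [heq, show (fun x => ∑ j ∈ Finset.range s, (-1:ℝ)^j * ((Iic (a j)).indicator ψ x))
      = ∑ j ∈ Finset.range s, (fun x => (-1:ℝ)^j * ((Iic (a j)).indicator ψ x)) from by
    funext x; rw [Finset.sum_apply]]
  exact IntervalIntegrable.sum _ (fun j _ => (ind_int hψ (a j) u v).const_mul _)

lemma NaF_mul_integral (s : ℕ) (a : ℕ → ℝ) (ha : ∀ i j, i < j → j < s → a j < a i)
    (hap : ∀ j, j < s → 0 < a j)
    {ψ π : ℝ → ℝ} (hψ : Continuous ψ) (hπ : ∀ x, HasDerivAt π (ψ x) x) (hπ0 : π 0 = 0)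
    (T : ℝ) (hT : ∀ j, j < s → a j ≤ T) :
    ∫ x in (0:ℝ)..T, NaF s a x * ψ x = ∑ j ∈ Finset.range s, (-1:ℝ)^j * π (a j) := by
  have heq : EqOn (fun x => NaF s a x * ψ x)
      (fun x => ∑ j ∈ Finset.range s, (-1:ℝ)^j * ((Iic (a j)).indicator ψ x)) (uIcc 0 T) :=
    fun x _ => NaF_mul_repr s a ha ψ x
  rw [intervalIntegral.integral_congr heq,
    intervalIntegral.integral_finset_sum (fun j _ => (ind_int hψ (a j) 0 T).const_mul _)]
  apply Finset.sum_congr rfl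
  intro j hj
  have hj' := Finset.mem_range.1 hj
  rw [intervalIntegral.integral_const_mul,
    int_indicator hψ hπ hπ0 T (a j) (hap j hj') (hT j hj')]

lemma core (s s' : ℕ) (a b : ℕ → ℝ)
    (ha : ∀ i j, i < j → j < s → a j < a i) (hap : ∀ j, j < s → 0 < a j)
    (hb : ∀ i j, i < j → j < s' → b j < b i) (hbp : ∀ j, j < s' → 0 < b j)
    (hs : 1 ≤ s) (hs' : 1 ≤ s')
    (P : Finset ℕ) (hP1 : ∀ p ∈ P, 1 ≤ p) (hsP : s ≤ P.card) (hs'P : s' ≤ P.card)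
    (heqs : ∀ p ∈ P, ∑ j ∈ Finset.range s, (-1:ℝ)^j * (a j)^p
      = ∑ j ∈ Finset.range s', (-1:ℝ)^j * (b j)^p) :
    s = s' ∧ ∀ j, j < s → a j = b j := by
  classical
  obtain ⟨Z, σ, hσ, hZk, hc1, hc2, hpat⟩ := LB (s+s') s s' a b (le_refl _) ha hap hb hbp
  set n := P.card with hndef
  have hn1 : 1 ≤ n := le_trans hs hsP
  have hZn : Z.card ≤ n - 1 := by
    rcases hσ with rfl | rfl
    · have := hc1 rfl; omega
    · have := hc2 rfl; omega
  set T : ℝ := max (a 0) (b 0) with hTdef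
  have hT0 : 0 < T := lt_of_lt_of_le (hap 0 hs) (le_max_left _ _)
  have haT : ∀ j, j < s → a j ≤ T := fun j hj => le_trans (head_max s a ha j hj) (le_max_left _ _)
  have hbT : ∀ j, j < s' → b j ≤ T := fun j hj => le_trans (head_max s' b hb j hj) (le_max_right _ _)
  have hZT : ∀ z ∈ Z, z < T := by
    intro z hz
    rcases (hZk z hz).2 with ⟨j, hj, hlt⟩ | ⟨j, hj, hlt⟩
    · exact lt_of_lt_of_le hlt (haT j hj)
    · exact lt_of_lt_of_le hlt (hbT j hj)
  set npad := (n-1) - Z.card with hnpaddef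
  set Pads := (Finset.range npad).image (fun i : ℕ => T + 1 + (i:ℝ)) with hPadsdef
  have hPadscard : Pads.card = npad := by
    rw [hPadsdef, Finset.card_image_of_injOn, Finset.card_range]
    intro i _ j _ hij
    simp only at hij
    have : (i:ℝ) = j := by linarith
    exact_mod_cast this
  have hPadsge : ∀ p ∈ Pads, T + 1 ≤ p := by
    intro p hp
    obtain ⟨i, _, rfl⟩ := Finset.mem_image.1 hp
    have : (0:ℝ) ≤ i := Nat.cast_nonneg i
    linarith
  have hdisj : Disjoint Z Pads := by
    rw [Finset.disjoint_left]
    intro z hz hzp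
    linarith [hZT z hz, hPadsge z hzp]
  set W := Z ∪ Pads with hWdef
  have hWcard : W.card = n - 1 := by
    rw [hWdef, Finset.card_union_of_disjoint hdisj, hPadscard]
    omega
  have hWpos : ∀ w ∈ W, 0 < w := by
    intro w hw
    rcases Finset.mem_union.1 hw with h | h
    · exact (hZk w h).1
    · linarith [hPadsge w h]
  set E := P.image (fun p => p - 1) with hEdef
  have hEcard : E.card = n := by
    rw [hEdef, Finset.card_image_of_injOn, hndef]
    intro p hp q hq hpq
    have := hP1 p hp
    have := hP1 q hq
    simp only at hpq
    omega
  obtain ⟨c, hcne, hcroot'⟩ := exists_kernel E W (by omega)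
  have hcard' : W.card + 1 = E.card := by omega
  have hcroot : ∀ w ∈ W, psi E c w = 0 := fun w hw => hcroot' w hw
  obtain ⟨τ, hτ, hψpat⟩ := psi_pattern E c W hWpos hcard' hcroot hcne
  set ψ := psi E c with hψdef
  have hψcont : Continuous ψ := psi_cont E c
  set d : ℕ → ℝ := fun p => c (p-1) / p with hddef
  set π : ℝ → ℝ := fun x => ∑ p ∈ P, d p * x ^ p with hπdef
  have hπ0 : π 0 = 0 := by
    rw [hπdef]
    apply Finset.sum_eq_zero
    intro p hp
    rw [zero_pow (by have := hP1 p hp; omega : p ≠ 0), mul_zero]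
  have hπderiv : ∀ x, HasDerivAt π (ψ x) x := by
    intro x
    have h := HasDerivAt.fun_sum (fun p (_ : p ∈ P) => (hasDerivAt_pow p x).const_mul (d p))
    have heq2 : ∑ p ∈ P, d p * ((p:ℝ) * x ^ (p-1)) = ψ x := by
      rw [hψdef, psi, hEdef, Finset.sum_image (by
        intro p hp q hq hpq
        have := hP1 p hp
        have := hP1 q hq
        beta_reduce at hpq
        omega)]
      apply Finset.sum_congr rfl
      intro p hp
      have hp1 := hP1 p hp
      have hpne : (p:ℝ) ≠ 0 := by
        have : 0 < p := hp1
        positivity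
      rw [hddef]
      field_simp
    rw [← heq2]
    exact h
  have hswap : ∀ (u : ℕ) (e : ℕ → ℝ), ∑ j ∈ Finset.range u, (-1:ℝ)^j * π (e j)
      = ∑ p ∈ P, d p * (∑ j ∈ Finset.range u, (-1:ℝ)^j * (e j)^p) := by
    intro u e
    calc ∑ j ∈ Finset.range u, (-1:ℝ)^j * π (e j)
        = ∑ j ∈ Finset.range u, ∑ p ∈ P, (-1:ℝ)^j * (d p * (e j)^p) := by
          apply Finset.sum_congr rfl
          intro j _
          rw [hπdef]
          rw [Finset.mul_sum]
      _ = ∑ p ∈ P, ∑ j ∈ Finset.range u, (-1:ℝ)^j * (d p * (e j)^p) := Finset.sum_comm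
      _ = ∑ p ∈ P, d p * ∑ j ∈ Finset.range u, (-1:ℝ)^j * (e j)^p := by
          apply Finset.sum_congr rfl
          intro p _
          rw [Finset.mul_sum]
          apply Finset.sum_congr rfl
          intro j _
          ring
  have hcomb : ∑ j ∈ Finset.range s, (-1:ℝ)^j * π (a j)
      = ∑ j ∈ Finset.range s', (-1:ℝ)^j * π (b j) := by
    rw [hswap s a, hswap s' b]
    apply Finset.sum_congr rfl
    intro p hp
    rw [heqs p hp]
  have hIint : ∫ x in (0:ℝ)..T, Dfun s a s' b x * ψ x = 0 := by
    have hsub : ∀ x, Dfun s a s' b x * ψ x = NaF s a x * ψ x - NaF s' b x * ψ x := by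
      intro x
      rw [Dfun]
      ring
    rw [intervalIntegral.integral_congr (fun x _ => hsub x),
      intervalIntegral.integral_sub (NaF_mul_int s a ha hψcont 0 T)
        (NaF_mul_int s' b hb hψcont 0 T),
      NaF_mul_integral s a ha hap hψcont hπderiv hπ0 T haT,
      NaF_mul_integral s' b hb hbp hψcont hπderiv hπ0 T hbT, hcomb, sub_self]
  set κ := σ * τ * (-1:ℝ)^npad with hκdef
  have hpm : (-1:ℝ)^npad = 1 ∨ (-1:ℝ)^npad = -1 := by
    rcases Nat.even_or_odd npad with he | ho
    · exact Or.inl he.neg_one_pow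
    · exact Or.inr ho.neg_one_pow
  have hκvals : κ = 1 ∨ κ = -1 := by
    rcases hσ with rfl | rfl <;> rcases hτ with rfl | rfl <;> rcases hpm with h | h <;>
      rw [hκdef, h] <;> norm_num
  have hκne : κ ≠ 0 := by rcases hκvals with h | h <;> rw [h] <;> norm_num
  have hΦint : ∀ u v : ℝ, IntervalIntegrable (fun x => Dfun s a s' b x * ψ x) volume u v := by
    intro u v
    have heq3 : (fun x => Dfun s a s' b x * ψ x)
        = fun x => NaF s a x * ψ x - NaF s' b x * ψ x := by
      funext x
      rw [Dfun]
      ring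
    rw [heq3]
    exact (NaF_mul_int s a ha hψcont u v).sub (NaF_mul_int s' b hb hψcont u v)
  have hptw : ∀ x, 0 < x → x ≤ T → 0 ≤ κ * (Dfun s a s' b x * ψ x) := by
    intro x hx hxT
    by_cases hD : Dfun s a s' b x = 0
    · rw [hD]
      simp
    by_cases hxW : x ∈ W
    · have hz : ψ x = 0 := hcroot x hxW
      rw [hz]
      simp
    have hDx := hpat x hx hD
    have hψx := hψpat x hx hxW
    have hcntW : (W.filter (fun z => x ≤ z)).card
        = (Z.filter (fun z => x ≤ z)).card + npad := by
      rw [hWdef, Finset.filter_union,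
        Finset.card_union_of_disjoint (Finset.disjoint_filter_filter hdisj)]
      congr 1
      rw [Finset.filter_true_of_mem, hPadscard]
      intro p hp
      linarith [hPadsge p hp]
    rw [hcntW, pow_add] at hψx
    rw [hDx, hκdef]
    rcases hσ with rfl | rfl <;> nlinarith [hψx]
  have hDzero : ∀ x, 0 < x → NaF s a x = NaF s' b x := by
    intro x hx
    by_contra hne
    have hD : Dfun s a s' b x ≠ 0 := by
      rw [Dfun]
      exact sub_ne_zero.2 hne
    have hxT : x ≤ T := by
      by_contra hgt
      push_neg at hgt
      apply hD
      rw [Dfun, NaF_top s a x (fun j hj => lt_of_le_of_lt (haT j hj) hgt),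
        NaF_top s' b x (fun j hj => lt_of_le_of_lt (hbT j hj) hgt), sub_self]
    set Kn : Finset ℝ := insert 0 (((Finset.range s).image a) ∪ ((Finset.range s').image b))
      with hKndef
    set Kf := Kn.filter (fun y => y < x) with hKfdef
    have h0Kf : (0:ℝ) ∈ Kf := Finset.mem_filter.2 ⟨Finset.mem_insert_self _ _, hx⟩
    have hKfne : Kf.Nonempty := ⟨0, h0Kf⟩
    set u := Kf.max' hKfne with hudef
    have hux : u < x := (Finset.mem_filter.1 (Kf.max'_mem hKfne)).2
    have hu0 : 0 ≤ u := Finset.le_max' Kf 0 h0Kf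
    have hcnta : ∀ y, u < y → y ≤ x → cnt s a y = cnt s a x := by
      intro y hy1 hy2
      rw [cnt, cnt]
      congr 1
      apply Finset.filter_congr
      intro j hj
      try simp only [eq_iff_iff]
      constructor
      · intro h
        by_contra hlt
        push_neg at hlt
        have hmem : a j ∈ Kf := Finset.mem_filter.2
          ⟨Finset.mem_insert_of_mem (Finset.mem_union_left _ (Finset.mem_image_of_mem a hj)), hlt⟩
        have := Finset.le_max' Kf _ hmem
        linarith
      · intro h
        exact le_trans hy2 h
    have hcntb : ∀ y, u < y → y ≤ x → cnt s' b y = cnt s' b x := by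
      intro y hy1 hy2
      rw [cnt, cnt]
      congr 1
      apply Finset.filter_congr
      intro j hj
      try simp only [eq_iff_iff]
      constructor
      · intro h
        by_contra hlt
        push_neg at hlt
        have hmem : b j ∈ Kf := Finset.mem_filter.2
          ⟨Finset.mem_insert_of_mem (Finset.mem_union_right _ (Finset.mem_image_of_mem b hj)), hlt⟩
        have := Finset.le_max' Kf _ hmem
        linarith
      · intro h
        exact le_trans hy2 h
    have hDconst : ∀ y, u < y → y ≤ x → Dfun s a s' b y = Dfun s a s' b x := by
      intro y h1 h2
      rw [Dfun, Dfun, NaF, NaF, NaF, NaF, hcnta y h1 h2, hcntb y h1 h2]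
    have hu' : ∃ u', u ≤ u' ∧ u' < x ∧ ∀ w ∈ W, ¬(u' < w ∧ w < x) := by
      set Wf := W.filter (fun w => u < w ∧ w < x) with hWfdef
      rcases Finset.eq_empty_or_nonempty Wf with hemp | hne'
      · refine ⟨u, le_refl _, hux, ?_⟩
        rintro w hw ⟨h1, h2⟩
        have hmem : w ∈ Wf := Finset.mem_filter.2 ⟨hw, h1, h2⟩
        rw [hemp] at hmem
        exact absurd hmem (Finset.notMem_empty _)
      · have hmax := Finset.mem_filter.1 (Wf.max'_mem hne')
        refine ⟨Wf.max' hne', (hmax.2.1).le, hmax.2.2, ?_⟩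
        rintro w hw ⟨h1, h2⟩
        have hmem : w ∈ Wf := Finset.mem_filter.2 ⟨hw, lt_trans hmax.2.1 h1, h2⟩
        have := Finset.le_max' Wf w hmem
        linarith
    obtain ⟨u', huu', hu'x, hu'W⟩ := hu'
    set α := (u' + x)/2 with hαdef
    set β := (α + x)/2 with hβdef
    have hu'α : u' < α := by rw [hαdef]; linarith
    have hαβ : α < β := by rw [hβdef]; linarith [hu'α]
    have hβx : β < x := by rw [hβdef]; linarith [hu'α]
    have hα0 : 0 < α := by linarith
    have hposmid : 0 < ∫ y in α..β, κ * (Dfun s a s' b y * ψ y) := by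
      apply intervalIntegral.intervalIntegral_pos_of_pos_on
      · exact (hΦint α β).const_mul κ
      · intro y hy
        have hy0 : 0 < y := lt_trans hα0 hy.1
        have hyx : y < x := lt_trans hy.2 hβx
        have hyW : y ∉ W := fun h => hu'W y h ⟨lt_trans hu'α hy.1, hyx⟩
        have hyD : Dfun s a s' b y = Dfun s a s' b x :=
          hDconst y (lt_of_le_of_lt huu' (lt_trans hu'α hy.1)) hyx.le
        have hge := hptw y hy0 (le_trans hyx.le hxT)
        refine lt_of_le_of_ne hge (Ne.symm ?_)
        apply mul_ne_zero hκne
        apply mul_ne_zero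
        · rw [hyD]
          exact hD
        · exact psi_ne E c W hWpos hcard' hcroot hcne y hy0 hyW
      · exact hαβ
    have hae0 : ∀ᵐ (y:ℝ), y ≠ (0:ℝ) := by
      rw [MeasureTheory.ae_iff]
      have : {y : ℝ | ¬ y ≠ 0} = {0} := by
        ext y
        simp
      rw [this]
      exact Real.volume_singleton
    have hI1 : 0 ≤ ∫ y in (0:ℝ)..α, κ * (Dfun s a s' b y * ψ y) := by
      apply intervalIntegral.integral_nonneg_of_ae_restrict hα0.le
      rw [Filter.EventuallyLE, ae_restrict_iff' measurableSet_Icc]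
      filter_upwards [hae0] with y hy0 hymem
      simp only [Pi.zero_apply]
      exact hptw y (lt_of_le_of_ne hymem.1 (Ne.symm hy0)) (le_trans hymem.2 (by linarith))
    have hI3 : 0 ≤ ∫ y in β..T, κ * (Dfun s a s' b y * ψ y) := by
      apply intervalIntegral.integral_nonneg (by linarith)
      intro y hy
      exact hptw y (lt_of_lt_of_le (by linarith) hy.1) hy.2
    have htot : ∫ y in (0:ℝ)..T, κ * (Dfun s a s' b y * ψ y) = 0 := by
      rw [intervalIntegral.integral_const_mul, hIint, mul_zero]
    have hsplit1 : (∫ y in (0:ℝ)..α, κ * (Dfun s a s' b y * ψ y))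
        + (∫ y in α..β, κ * (Dfun s a s' b y * ψ y))
        = ∫ y in (0:ℝ)..β, κ * (Dfun s a s' b y * ψ y) :=
      intervalIntegral.integral_add_adjacent_intervals
        ((hΦint 0 α).const_mul κ) ((hΦint α β).const_mul κ)
    have hsplit2 : (∫ y in (0:ℝ)..β, κ * (Dfun s a s' b y * ψ y))
        + (∫ y in β..T, κ * (Dfun s a s' b y * ψ y))
        = ∫ y in (0:ℝ)..T, κ * (Dfun s a s' b y * ψ y) :=
      intervalIntegral.integral_add_adjacent_intervals
        ((hΦint 0 β).const_mul κ) ((hΦint β T).const_mul κ)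
    linarith
  exact NaF_inj (s+s') s s' a b (le_refl _) ha hap hb hbp hDzero

/-- Lemma 2: two splines in `Φ_{r,d-1}` with equal norms
`‖φ_1^{(k_i)}‖ = ‖φ_2^{(k_i)}‖`, `i = 1,…,d`, `k_d = r`, are identical. -/
theorem stmt_11 (r d : ℕ) (k : ℕ → ℕ)
    (hmono : ∀ i j, 1 ≤ i → i < j → j ≤ d → k i < k j)
    (hkd : k d = r)
    (φ1 φ2 : ℝ → ℝ) (h1 : IsSpline r (d - 1) φ1) (h2 : IsSpline r (d - 1) φ2)
    (heq : ∀ i, 1 ≤ i → i ≤ d → nrm r (k i) φ1 = nrm r (k i) φ2) :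
    φ1 = φ2 := by
  obtain ⟨s, hs1, hsd, a, l, ha, hap, hl, hφ1⟩ := h1
  obtain ⟨s', hs1', hsd', b, m, hb, hbp, hm, hφ2⟩ := h2
  have hd2 : 2 ≤ d := by omega
  have hr1 : 1 ≤ r := by
    have := hmono 1 d (le_refl _) (by omega) (le_refl _)
    omega
  -- l = m
  have hlm : l = m := by
    have h := heq d (by omega) (le_refl d)
    rw [hφ1, hφ2, hkd] at h
    rw [nrm_spline_top r s a l ha hap hl hs1 hr1,
      nrm_spline_top r s' b m hb hbp hm hs1' hr1] at h
    exact h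
  have hkir : ∀ i, 1 ≤ i → i ≤ d - 1 → k i < r := by
    intro i h1 h2
    have := hmono i d h1 (by omega) (le_refl d)
    omega
  set P := (Finset.Icc 1 (d-1)).image (fun i => r - k i) with hPdef
  have hPcard : P.card = d - 1 := by
    rw [hPdef, Finset.card_image_of_injOn, Nat.card_Icc]
    · omega
    · intro i hi j hj hij
      simp only [Finset.mem_coe, Finset.mem_Icc] at hi hj
      simp only at hij
      have hki := hkir i hi.1 hi.2
      have hkj := hkir j hj.1 hj.2
      rcases lt_trichotomy i j with h | h | h
      · have := hmono i j hi.1 h (by omega)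
        omega
      · exact h
      · have := hmono j i hj.1 h (by omega)
        omega
  have hP1 : ∀ p ∈ P, 1 ≤ p := by
    intro p hp
    rw [hPdef] at hp
    obtain ⟨i, hi, rfl⟩ := Finset.mem_image.1 hp
    simp only [Finset.mem_Icc] at hi
    have := hkir i hi.1 hi.2
    omega
  have heqs : ∀ p ∈ P, ∑ j ∈ Finset.range s, (-1:ℝ)^j * (a j)^p
      = ∑ j ∈ Finset.range s', (-1:ℝ)^j * (b j)^p := by
    intro p hp
    rw [hPdef] at hp
    obtain ⟨i, hi, rfl⟩ := Finset.mem_image.1 hp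
    simp only [Finset.mem_Icc] at hi
    have hkri := hkir i hi.1 hi.2
    have h := heq i hi.1 (by omega)
    rw [hφ1, hφ2,
      nrm_spline_eval r s a l ha hap hl (k i) (by omega),
      nrm_spline_eval r s' b m hb hbp hm (k i) (by omega), ← hlm] at h
    have hcne : (l / (Nat.factorial (r - k i) : ℝ)) ≠ 0 := by
      have h1 : (0:ℝ) < Nat.factorial (r - k i) := by positivity
      positivity
    exact mul_left_cancel₀ hcne h
  obtain ⟨hss', hab⟩ := core s s' a b ha hap hb hbp hs1 hs1' P hP1
    (by omega) (by omega) heqs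
  rw [hφ1, hφ2, ← hss', ← hlm]
  funext t
  rw [splineFun, splineFun]
  congr 1
  apply Finset.sum_congr rfl
  intro j hj
  rw [hab j (Finset.mem_range.1 hj)]
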